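/- arXiv:1212.1018 — 7 statements merged into one kernel-verified Lean document; each statement's English description precedes it below -/
import Mathlib

section
/- Let A be a small category with object set X. If for every right A-module Q the canonical map β_Q : {(q,a) | s(q) = t(q) = t(a)} → {(q,a) | s(q) = s(a), t(q) = t(a)}, (q,a) ↦ (q.a, a), is a bijection, then A is a groupoid, i.e., every morphism of A is invertible. -/
/-- A small category with object set `X`, presented as a monoid in the duoidal
category of spans over `X`: morphisms `A` with source/target maps, composition
`comp b a` (defined when `s b = t a`, "first `a`, then `b`") and identities. -/
structure SpanCat (X : Type) where
  A : Type
  s : A → X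
  t : A → X
  comp : ∀ (b a : A), s b = t a → A
  one : X → A
  s_comp : ∀ b a h, s (comp b a h) = s a
  t_comp : ∀ b a h, t (comp b a h) = t b
  s_one : ∀ x, s (one x) = x
  t_one : ∀ x, t (one x) = x
  assoc : ∀ (c b a : A) (h1 : s c = t b) (h2 : s b = t a),
    comp (comp c b h1) a ((s_comp c b h1).trans h2) =
      comp c (comp b a h2) (h1.trans (t_comp b a h2).symm)
  comp_one : ∀ a, comp a (one (s a)) (t_one (s a)).symm = a
  one_comp : ∀ a, comp (one (t a)) a (s_one (t a)) = a

/-- A right module over a small category `C` (viewed as a monoid in spans over `X`):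
a span `Q` over `X` with an associative unital action `act q a` defined when
`s q = t a`, satisfying `s (q.a) = s a` and `t (q.a) = t q`. -/
structure SpanMod (X : Type) (C : SpanCat X) where
  Q : Type
  s : Q → X
  t : Q → X
  act : ∀ (q : Q) (a : C.A), s q = C.t a → Q
  s_act : ∀ q a h, s (act q a h) = C.s a
  t_act : ∀ q a h, t (act q a h) = t q
  act_assoc : ∀ q a b (h1 : s q = C.t a) (h2 : C.s a = C.t b),
    act (act q a h1) b ((s_act q a h1).trans h2) =
      act q (C.comp a b h2) (h1.trans (C.t_comp a b h2).symm)
  act_one : ∀ q, act q (C.one (s q)) (C.t_one (s q)).symm = q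

/-- The canonical map `β_Q : {(q,a) | s q = t q = t a} → {(q,a) | s q = s a, t q = t a}`,
`(q, a) ↦ (q.a, a)`. -/
def betaMap {X : Type} (C : SpanCat X) (M : SpanMod X C) :
    {p : M.Q × C.A // M.s p.1 = M.t p.1 ∧ M.t p.1 = C.t p.2} →
    {p : M.Q × C.A // M.s p.1 = C.s p.2 ∧ M.t p.1 = C.t p.2} :=
  fun p => ⟨(M.act p.1.1 p.1.2 (p.2.1.trans p.2.2), p.1.2),
    M.s_act _ _ _, (M.t_act _ _ _).trans p.2.2⟩

/-- The regular module with target map collapsed to a constant `x`. -/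
def Mconst {X : Type} (C : SpanCat X) (x : X) : SpanMod X C where
  Q := C.A
  s := C.s
  t := fun _ => x
  act := fun q a h => C.comp q a h
  s_act := C.s_comp
  t_act := fun _ _ _ => rfl
  act_assoc := fun q a b h1 h2 => C.assoc q a b h1 h2
  act_one := C.comp_one


theorem comp_congr_left {X : Type} (C : SpanCat X) {b1 b2 : C.A} (a : C.A)
    (hb : b1 = b2) (p : C.s b1 = C.t a) :
    C.comp b1 a p = C.comp b2 a ((congrArg C.s hb).symm.trans p) := by
  subst hb; rfl

theorem comp_congr_right {X : Type} (C : SpanCat X) (b : C.A) {a1 a2 : C.A}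
    (ha : a1 = a2) (p : C.s b = C.t a1) :
    C.comp b a1 p = C.comp b a2 (p.trans (congrArg C.t ha)) := by
  subst ha; rfl

theorem leftInv {X : Type} (C : SpanCat X)
    (h : ∀ M : SpanMod X C, Function.Bijective (betaMap C M)) (a : C.A) :
    ∃ (b : C.A) (h1 : C.s b = C.t a), C.comp b a h1 = C.one (C.s a) := by
  obtain ⟨⟨⟨q, a'⟩, hd⟩, heq⟩ := (h (Mconst C (C.t a))).2
    ⟨(C.one (C.s a), a), C.s_one _, rfl⟩
  have hpair := Subtype.ext_iff.mp heq
  have ha' : a' = a := congrArg Prod.snd hpair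
  subst ha'
  have h1 : C.s q = C.t a' := hd.1
  have hfst : C.comp q a' (hd.1.trans hd.2) = C.one (C.s a') := congrArg Prod.fst hpair
  exact ⟨q, h1, hfst⟩

/-- If for every right `A`-module `Q` the canonical map `β_Q : (q,a) ↦ (q.a, a)` is
a bijection, then the small category `A` is a groupoid: every morphism is invertible. -/
theorem stmt3 {X : Type} (C : SpanCat X)
    (h : ∀ M : SpanMod X C, Function.Bijective (betaMap C M)) :
    ∀ a : C.A, ∃ (b : C.A) (h1 : C.s b = C.t a) (h2 : C.s a = C.t b),
      C.comp b a h1 = C.one (C.s a) ∧ C.comp a b h2 = C.one (C.t a) := by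
  intro a
  obtain ⟨b, h1, hb⟩ := leftInv C h a
  have htb : C.t b = C.s a := by
    have := C.t_comp b a h1
    rw [hb, C.t_one] at this
    exact this.symm
  obtain ⟨c, h1c, hc⟩ := leftInv C h b
  have htc : C.t c = C.s b := by
    have := C.t_comp c b h1c
    rw [hc, C.t_one] at this
    exact this.symm
  -- show c = a
  have hsc : C.s c = C.t b := h1c
  have hca : c = a := by
    have hassoc := C.assoc c b a h1c h1
    have lhs : C.comp (C.comp c b h1c) a ((C.s_comp c b h1c).trans h1) = a := by
      rw [comp_congr_left C a hc]
      rw [comp_congr_left C a (congrArg C.one h1)]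
      have := C.one_comp a
      convert this using 2
    have rhs : C.comp c (C.comp b a h1) (h1c.trans (C.t_comp b a h1).symm) = c := by
      rw [comp_congr_right C c hb]
      have hx : C.one (C.s a) = C.one (C.s c) := by rw [hsc, htb]
      rw [comp_congr_right C c hx]
      have := C.comp_one c
      convert this using 2
    rw [hassoc, rhs] at lhs
    exact lhs
  subst hca
  refine ⟨b, h1, htb.symm, hb, ?_⟩
  rw [show C.comp c b htb.symm = C.comp c b h1c from rfl, hc]
  exact congrArg C.one h1
end

section
/- Let A be a small category such that the map β_A : {(b,a) ∈ A × A | s(b) = t(b) = t(a)} → {(b,a) ∈ A × A | s(b) = s(a), t(b) = t(a)}, (b,a) ↦ (b∘a, a), is a bijection. Then every endomorphism of A is invertible: for every c ∈ A with s(c) = t(c) = x, there exists c⁻¹ ∈ A with c⁻¹ ∘ c = 1_x = c ∘ c⁻¹. -/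
/-- The small category `C` as a right module over itself, via composition. -/
def selfMod {X : Type} (C : SpanCat X) : SpanMod X C where
  Q := C.A
  s := C.s
  t := C.t
  act := C.comp
  s_act := C.s_comp
  t_act := C.t_comp
  act_assoc := C.assoc
  act_one := C.comp_one

theorem comp_congr {X : Type} (C : SpanCat X) {b b' a a' : C.A}
    (hb : b = b') (ha : a = a') (h : C.s b = C.t a) (h' : C.s b' = C.t a') :
    C.comp b a h = C.comp b' a' h' := by
  subst hb; subst ha; rfl

theorem exists_left_inv {X : Type} (C : SpanCat X)
    (h : Function.Surjective (betaMap C (selfMod C))) :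
    ∀ c, C.s c = C.t c →
      ∃ b, C.s b = C.t b ∧ ∃ h1 : C.s b = C.t c, C.comp b c h1 = C.one (C.s c) := by
  intro c hc
  obtain ⟨⟨⟨q, a⟩, hq1, hq2⟩, hβ⟩ := h ⟨(C.one (C.s c), c),
    C.s_one _, (C.t_one _).trans hc⟩
  have h' := congrArg Subtype.val hβ
  simp only [betaMap, selfMod] at h'
  have ha : a = c := congrArg Prod.snd h'
  subst ha
  have hq1' : C.s q = C.t q := hq1
  have hq2' : C.t q = C.t a := hq2
  exact ⟨q, hq1', hq1'.trans hq2', congrArg Prod.fst h'⟩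

/-- If the canonical map `β_A : (b,a) ↦ (b∘a, a)` (with `A` acting on itself by
composition) is a bijection, then every endomorphism `c` of `A` is invertible. -/
theorem stmt4 {X : Type} (C : SpanCat X)
    (h : Function.Bijective (betaMap C (selfMod C))) :
    ∀ (c : C.A), C.s c = C.t c →
      ∃ (b : C.A) (h1 : C.s b = C.t c) (h2 : C.s c = C.t b),
        C.comp b c h1 = C.one (C.s c) ∧ C.comp c b h2 = C.one (C.s c) := by
  intro c hc
  obtain ⟨q, hq0, hqc, hq⟩ := exists_left_inv C h.2 c hc
  obtain ⟨p, hp0, hpq, hp⟩ := exists_left_inv C h.2 q hq0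
  have htq : C.t q = C.s c := hq0.symm.trans (hqc.trans hc.symm)
  have hpc : p = c := by
    have e1 : c = C.comp (C.one (C.t c)) c (C.s_one _) := (C.one_comp c).symm
    have e2 : C.comp (C.one (C.t c)) c (C.s_one _)
        = C.comp (C.comp p q hpq) c ((C.s_comp p q hpq).trans hqc) :=
      comp_congr C (hp.trans (congrArg C.one hqc)).symm rfl _ _
    have e3 := C.assoc p q c hpq hqc
    have e4 : C.comp p (C.comp q c hqc) (hpq.trans (C.t_comp q c hqc).symm)
        = C.comp p (C.one (C.s p)) (C.t_one (C.s p)).symm :=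
      comp_congr C rfl (hq.trans (congrArg C.one (hpq.trans htq).symm)) _ _
    exact (e1.trans (e2.trans (e3.trans (e4.trans (C.comp_one p))))).symm
  refine ⟨q, hqc, htq.symm, hq, ?_⟩
  have e5 : C.comp c q htq.symm = C.comp p q hpq := comp_congr C hpc.symm rfl _ _
  exact e5.trans (hp.trans (congrArg C.one (hqc.trans hc.symm)))
end

section
/- Let R be a commutative algebra over a commutative ring k, and for R-bimodules M, N define M ∘ N := (M ⊗_k N)/⟨r·m·r' ⊗ n − m ⊗ r·n·r' | r, r' ∈ R⟩, and set J := R with its canonical bimodule structure. Then for every R-bimodule M there is a natural isomorphism M ∘ J ≅ M/[M,R], realized by the mutually inverse maps m ∘ r ↦ [r·m] and [m] ↦ m ∘ 1. In particular, J ∘ J ≅ J via multiplication, so the endofunctor (−) ∘ J on R-bimodules is an idempotent monad. -/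
open TensorProduct

/-- An `R`-bimodule structure (over the commutative `k`-algebra `R`) on the
`k`-module `M`: two commuting `R`-actions, given as `k`-algebra homomorphisms
into the `k`-linear endomorphisms of `M`. -/
structure BimodStr (k R M : Type) [CommRing k] [CommRing R] [Algebra k R]
    [AddCommGroup M] [Module k M] where
  l : R →ₐ[k] Module.End k M
  r : R →ₐ[k] Module.End k M
  comm : ∀ (a b : R) (m : M), l a (r b m) = r b (l a m)

/-- The commutator sub-bimodule `[M,R]`, generated by all `r·m − m·r`. -/
def BimodStr.bracket {k R M : Type} [CommRing k] [CommRing R] [Algebra k R]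
    [AddCommGroup M] [Module k M] (B : BimodStr k R M) : Submodule k M :=
  Submodule.span k {x | ∃ (a : R) (m : M), x = B.l a m - B.r a m}

/-- `R` itself as an `R`-bimodule (the unit object `J`). -/
def Jbim (k R : Type) [CommRing k] [CommRing R] [Algebra k R] : BimodStr k R R where
  l := Algebra.lmul k R
  r := Algebra.lmul k R
  comm := fun a b m => by
    simp [Algebra.lmul, mul_left_comm]

/-- The defining relations of `M ∘ N`: `r·m·r' ⊗ n − m ⊗ r·n·r'`. -/
def circSub {k R M N : Type} [CommRing k] [CommRing R] [Algebra k R]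
    [AddCommGroup M] [Module k M] [AddCommGroup N] [Module k N]
    (B : BimodStr k R M) (C : BimodStr k R N) :
    Submodule k (TensorProduct k M N) :=
  Submodule.span k {x | ∃ (a a' : R) (m : M) (n : N),
    x = (B.l a (B.r a' m)) ⊗ₜ[k] n - m ⊗ₜ[k] (C.l a (C.r a' n))}

/-- The monoidal product `M ∘ N = (M ⊗_k N)/⟨r·m·r' ⊗ n − m ⊗ r·n·r'⟩`. -/
abbrev circ {k R M N : Type} [CommRing k] [CommRing R] [Algebra k R]
    [AddCommGroup M] [Module k M] [AddCommGroup N] [Module k N]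
    (B : BimodStr k R M) (C : BimodStr k R N) :=
  TensorProduct k M N ⧸ circSub B C

section Aux

variable {k R M : Type} [CommRing k] [CommRing R] [Algebra k R]
  [AddCommGroup M] [Module k M] (B : BimodStr k R M)

theorem mem_bracket (a : R) (m : M) : B.l a m - B.r a m ∈ B.bracket :=
  Submodule.subset_span ⟨a, m, rfl⟩

/-- The forward map `M ⊗ R → M/[M,R]`, `m ⊗ a ↦ [l a m]`, before descent. -/
noncomputable def fwd0 : TensorProduct k M R →ₗ[k] (M ⧸ B.bracket) :=
  TensorProduct.lift
    (((LinearMap.llcomp k M M (M ⧸ B.bracket) B.bracket.mkQ).comp B.l.toLinearMap).flip)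

@[simp] theorem fwd0_tmul (m : M) (a : R) :
    fwd0 B (m ⊗ₜ[k] a) = Submodule.Quotient.mk (B.l a m) := rfl

theorem circSub_le_ker_fwd0 : circSub B (Jbim k R) ≤ LinearMap.ker (fwd0 B) := by
  rw [circSub, Submodule.span_le]
  rintro x ⟨a, a', m, n, rfl⟩
  simp only [SetLike.mem_coe, LinearMap.mem_ker, map_sub, fwd0_tmul]
  rw [sub_eq_zero]
  apply (Submodule.Quotient.eq _).2
  have e1 : B.l n (B.l a (B.r a' m)) = B.r a' (B.l (n * a) m) := by
    rw [← B.comm, map_mul]; rfl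
  have e2 : B.l ((Jbim k R).l a ((Jbim k R).r a' n)) m = B.l a' (B.l (n * a) m) := by
    have h : (Jbim k R).l a ((Jbim k R).r a' n) = a' * (n * a) := by
      show a * (a' * n) = a' * (n * a); ring
    rw [h, map_mul]; rfl
  rw [e1, e2]
  have := B.bracket.neg_mem (mem_bracket B a' (B.l (n * a) m))
  rwa [neg_sub] at this

/-- The backward map `M → M ∘ J`, `m ↦ [m ⊗ 1]`. -/
noncomputable def bwd0 : M →ₗ[k] circ B (Jbim k R) :=
  (circSub B (Jbim k R)).mkQ.comp ((TensorProduct.mk k M R).flip 1)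

@[simp] theorem bwd0_apply (m : M) :
    bwd0 B m = Submodule.Quotient.mk (m ⊗ₜ[k] (1 : R)) := rfl

theorem tmul_one_rel (m : M) (a : R) :
    (Submodule.Quotient.mk ((B.l a m) ⊗ₜ[k] (1 : R)) : circ B (Jbim k R))
      = Submodule.Quotient.mk (m ⊗ₜ[k] a) := by
  apply (Submodule.Quotient.eq _).2
  have : B.l a m ⊗ₜ[k] (1:R) - m ⊗ₜ[k] a
      = (B.l a (B.r 1 m)) ⊗ₜ[k] (1:R) - m ⊗ₜ[k] ((Jbim k R).l a ((Jbim k R).r 1 1)) := by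
    simp [Jbim, Algebra.lmul]
  rw [this]
  exact Submodule.subset_span ⟨a, 1, m, 1, rfl⟩

theorem tmul_one_rel' (m : M) (a : R) :
    (Submodule.Quotient.mk ((B.r a m) ⊗ₜ[k] (1 : R)) : circ B (Jbim k R))
      = Submodule.Quotient.mk (m ⊗ₜ[k] a) := by
  apply (Submodule.Quotient.eq _).2
  have : B.r a m ⊗ₜ[k] (1:R) - m ⊗ₜ[k] a
      = (B.l 1 (B.r a m)) ⊗ₜ[k] (1:R) - m ⊗ₜ[k] ((Jbim k R).l 1 ((Jbim k R).r a 1)) := by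
    simp [Jbim, Algebra.lmul]
  rw [this]
  exact Submodule.subset_span ⟨1, a, m, 1, rfl⟩

theorem bracket_le_ker_bwd0 : B.bracket ≤ LinearMap.ker (bwd0 B) := by
  rw [BimodStr.bracket, Submodule.span_le]
  rintro x ⟨a, m, rfl⟩
  simp only [SetLike.mem_coe, LinearMap.mem_ker, map_sub, bwd0_apply]
  rw [tmul_one_rel, tmul_one_rel', sub_self]

/-- The descended forward map `M ∘ J → M/[M,R]`. -/
noncomputable def fwd : circ B (Jbim k R) →ₗ[k] M ⧸ B.bracket :=
  Submodule.liftQ _ (fwd0 B) (circSub_le_ker_fwd0 B)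

/-- The descended backward map `M/[M,R] → M ∘ J`. -/
noncomputable def bwd : (M ⧸ B.bracket) →ₗ[k] circ B (Jbim k R) :=
  Submodule.liftQ _ (bwd0 B) (bracket_le_ker_bwd0 B)

/-- The isomorphism `M ∘ J ≅ M/[M,R]`. -/
noncomputable def eqv : circ B (Jbim k R) ≃ₗ[k] (M ⧸ B.bracket) :=
  LinearEquiv.ofLinear (fwd B) (bwd B)
    (by
      apply Submodule.linearMap_qext
      ext m
      simp [fwd, bwd, fwd0, bwd0])
    (by
      apply Submodule.linearMap_qext
      apply TensorProduct.ext'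
      intro m a
      simp only [LinearMap.comp_apply, Submodule.mkQ_apply, fwd, bwd,
        Submodule.liftQ_apply, fwd0_tmul, bwd0_apply, LinearMap.id_apply]
      exact tmul_one_rel B m a)

/-- The multiplication map `J ∘ J → R`, before descent. -/
noncomputable def mulFwd0 : TensorProduct k R R →ₗ[k] R :=
  TensorProduct.lift (LinearMap.mul k R)

@[simp] theorem mulFwd0_tmul (a b : R) : mulFwd0 (a ⊗ₜ[k] b) = a * b := rfl

theorem circSub_le_ker_mulFwd0 :
    circSub (Jbim k R) (Jbim k R) ≤ LinearMap.ker (mulFwd0 (k := k) (R := R)) := by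
  rw [circSub, Submodule.span_le]
  rintro x ⟨a, a', m, n, rfl⟩
  simp only [SetLike.mem_coe, LinearMap.mem_ker, map_sub, mulFwd0_tmul]
  show (Jbim k R).l a ((Jbim k R).r a' m) * n - m * ((Jbim k R).l a ((Jbim k R).r a' n)) = 0
  show a * (a' * m) * n - m * (a * (a' * n)) = 0
  ring

/-- The isomorphism `J ∘ J ≅ R` given by multiplication. -/
noncomputable def eqv' : circ (Jbim k R) (Jbim k R) ≃ₗ[k] R :=
  LinearEquiv.ofLinear (Submodule.liftQ _ mulFwd0 circSub_le_ker_mulFwd0)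
    (bwd0 (Jbim k R))
    (by ext r; simp [bwd0])
    (by
      apply Submodule.linearMap_qext
      apply TensorProduct.ext'
      intro a b
      simp only [LinearMap.comp_apply, Submodule.mkQ_apply, Submodule.liftQ_apply,
        mulFwd0_tmul, bwd0_apply, LinearMap.id_apply]
      have := tmul_one_rel (Jbim k R) a b
      rw [show (Jbim k R).l b a = a * b from mul_comm b a] at this
      exact this)

end Aux

/-- `M ∘ J ≅ M/[M,R]` via `m ∘ r ↦ [r·m]` with inverse `[m] ↦ m ∘ 1`; in
particular `J ∘ J ≅ J` via multiplication, and `(−) ∘ J` is an idempotent monad: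
the two induced `R`-actions on `M/[M,R]` coincide. -/
theorem stmt7 (k R : Type) [CommRing k] [CommRing R] [Algebra k R]
    (M : Type) [AddCommGroup M] [Module k M] (B : BimodStr k R M) :
    (∃ e : circ B (Jbim k R) ≃ₗ[k] (M ⧸ B.bracket),
      (∀ (m : M) (a : R),
        e (Submodule.Quotient.mk (m ⊗ₜ[k] a)) = Submodule.Quotient.mk (B.l a m)) ∧
      (∀ m : M,
        e.symm (Submodule.Quotient.mk m) = Submodule.Quotient.mk (m ⊗ₜ[k] (1:R)))) ∧
    (∃ e' : circ (Jbim k R) (Jbim k R) ≃ₗ[k] R,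
      ∀ a b : R, e' (Submodule.Quotient.mk (a ⊗ₜ[k] b)) = a * b) ∧
    (∀ (a : R) (m : M), B.l a m - B.r a m ∈ B.bracket) := by
  refine ⟨⟨eqv B, fun m a => ?_, fun m => ?_⟩, ⟨eqv', fun a b => ?_⟩, mem_bracket B⟩
  · rw [eqv, LinearEquiv.ofLinear_apply]
    exact congrArg _ rfl
  · rw [eqv, LinearEquiv.ofLinear_symm_apply]
    rfl
  · rw [eqv', LinearEquiv.ofLinear_apply]
    rfl
end

section
/- Let k be a commutative ring, R a commutative k-algebra, and A an R-bialgebroid whose source and target maps s, t : R → A land in the center of A, and which admits an antipode S : A → A satisfying S(a s(r)) = t(r) S(a), S(t(r) a) = S(a) s(r), a₁ S(a₂) = s(ε(a)), and S(a₁) a₂ = t(ε(a)). Then for every right A-comodule Q, the map ς_Q : Q ∘ A → (Q/[Q,R]) ⊗_R A, q ∘ a ↦ [q₀] ⊗ q₁ a, is an isomorphism, with inverse [q] ⊗ a ↦ q₀ ∘ S(q₁) a. -/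
open TensorProduct

section Bialgebroid

variable (k R A : Type) [CommRing k] [CommRing R] [Algebra k R]
  [Ring A] [Algebra k A]

/-- The relations defining the bimodule tensor square `A ⊗_R A`
(right action on the first leg, left action on the second):
`(t r * a) ⊗ b − a ⊗ (s r * b)`. -/
def corel (s t : R →ₐ[k] A) : Submodule k (TensorProduct k A A) :=
  Submodule.span k {x | ∃ (r : R) (b c : A),
    x = (t r * b) ⊗ₜ[k] c - b ⊗ₜ[k] (s r * c)}

/-- The analogous relations in `A ⊗ A ⊗ A` (both middle identifications). -/
def corel3 (s t : R →ₐ[k] A) :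
    Submodule k (TensorProduct k A (TensorProduct k A A)) :=
  Submodule.span k
    ({x | ∃ (r : R) (b c d : A),
        x = (t r * b) ⊗ₜ[k] (c ⊗ₜ[k] d) - b ⊗ₜ[k] ((s r * c) ⊗ₜ[k] d)} ∪
     {x | ∃ (r : R) (b c d : A),
        x = b ⊗ₜ[k] ((t r * c) ⊗ₜ[k] d) - b ⊗ₜ[k] (c ⊗ₜ[k] (s r * d))})

/-- An `R`-bialgebroid (`×_R`-bialgebra) whose source and target maps land in the
center of `A`: a `k`-algebra `A` with central algebra maps `src, tgt : R → A`
(so `r·a·r' = src r * tgt r' * a`), an `R`-coring structure, given by a chosen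
representative `comul : A → A ⊗_k A` of the comultiplication `A → A ⊗_R A` and the
counit, such that comultiplication and counit are algebra maps. -/
structure Bialgebroid where
  src : R →ₐ[k] A
  tgt : R →ₐ[k] A
  src_central : ∀ (r : R) (a : A), src r * a = a * src r
  tgt_central : ∀ (r : R) (a : A), tgt r * a = a * tgt r
  comul : A →ₗ[k] TensorProduct k A A
  counit : A →ₐ[k] R
  counit_left : ∀ (r : R) (a : A), counit (src r * a) = r * counit a
  counit_right : ∀ (r : R) (a : A), counit (tgt r * a) = r * counit a
  comul_counit_left : ∀ a : A,
    TensorProduct.lift ((LinearMap.mul k A) ∘ₗ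
      (src.toLinearMap ∘ₗ counit.toLinearMap)) (comul a) = a
  comul_counit_right : ∀ a : A,
    TensorProduct.lift (((LinearMap.mul k A) ∘ₗ
      (tgt.toLinearMap ∘ₗ counit.toLinearMap)).flip) (comul a) = a
  coassoc : ∀ a : A,
    (Submodule.Quotient.mk ((TensorProduct.assoc k A A A)
        ((LinearMap.rTensor A comul) (comul a))) :
      _ ⧸ corel3 k R A src tgt) =
    Submodule.Quotient.mk ((LinearMap.lTensor A comul) (comul a))
  comul_mul : ∀ a b : A,
    (Submodule.Quotient.mk (comul (a * b)) : _ ⧸ corel k R A src tgt) =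
      Submodule.Quotient.mk (comul a * comul b)
  comul_one :
    (Submodule.Quotient.mk (comul 1) : _ ⧸ corel k R A src tgt) =
      Submodule.Quotient.mk 1
  comul_src : ∀ (r : R) (a : A),
    (Submodule.Quotient.mk (comul (src r * a)) : _ ⧸ corel k R A src tgt) =
      Submodule.Quotient.mk (((src r) ⊗ₜ[k] (1:A)) * comul a)
  comul_tgt : ∀ (r : R) (a : A),
    (Submodule.Quotient.mk (comul (tgt r * a)) : _ ⧸ corel k R A src tgt) =
      Submodule.Quotient.mk (comul a * ((1:A) ⊗ₜ[k] (tgt r)))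

end Bialgebroid

section Comodule

variable {k R A : Type} [CommRing k] [CommRing R] [Algebra k R]
  [Ring A] [Algebra k A]

/-- A right comodule over the bialgebroid `Bg`: an `R`-bimodule `Q` (commuting
actions `ql`, `qr`) with a coassociative counital `R`-bimodule coaction, given by
a chosen representative `coact : Q → Q ⊗_k A` of the coaction `Q → Q ⊗_R A`. -/
structure Comod (Bg : Bialgebroid k R A) (Q : Type)
    [AddCommGroup Q] [Module k Q] where
  ql : R →ₐ[k] Module.End k Q
  qr : R →ₐ[k] Module.End k Q
  actcomm : ∀ (r r' : R) (q : Q), ql r (qr r' q) = qr r' (ql r q)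
  coact : Q →ₗ[k] TensorProduct k Q A
  counital : ∀ q : Q,
    TensorProduct.lift
      (LinearMap.flip ((qr.toLinearMap : R →ₗ[k] Module.End k Q) ∘ₗ
        Bg.counit.toLinearMap)) (coact q) = q
  coassoc : ∀ q : Q,
    (Submodule.Quotient.mk ((TensorProduct.assoc k Q A A)
        ((LinearMap.rTensor A coact) (coact q))) :
      _ ⧸ Submodule.span k
        ({x | ∃ (r : R) (p : Q) (c d : A),
            x = (qr r p) ⊗ₜ[k] (c ⊗ₜ[k] d) - p ⊗ₜ[k] ((Bg.src r * c) ⊗ₜ[k] d)} ∪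
         {x | ∃ (r : R) (p : Q) (c d : A),
            x = p ⊗ₜ[k] ((Bg.tgt r * c) ⊗ₜ[k] d) - p ⊗ₜ[k] (c ⊗ₜ[k] (Bg.src r * d))})) =
    Submodule.Quotient.mk ((LinearMap.lTensor Q Bg.comul) (coact q))
  coact_left : ∀ (r : R) (q : Q),
    (Submodule.Quotient.mk (coact (ql r q)) :
      _ ⧸ Submodule.span k {x | ∃ (r' : R) (p : Q) (c : A),
            x = (qr r' p) ⊗ₜ[k] c - p ⊗ₜ[k] (Bg.src r' * c)}) =
      Submodule.Quotient.mk ((LinearMap.rTensor A (ql r)) (coact q))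
  coact_right : ∀ (r : R) (q : Q),
    (Submodule.Quotient.mk (coact (qr r q)) :
      _ ⧸ Submodule.span k {x | ∃ (r' : R) (p : Q) (c : A),
            x = (qr r' p) ⊗ₜ[k] c - p ⊗ₜ[k] (Bg.src r' * c)}) =
      Submodule.Quotient.mk ((LinearMap.lTensor Q (LinearMap.mulLeft k (Bg.tgt r))) (coact q))

end Comodule

section Stmt9

variable {k R A : Type} [CommRing k] [CommRing R] [Algebra k R]
  [Ring A] [Algebra k A]

/-- The relations of `Q ∘ A`: `r·q·r' ⊗ a − q ⊗ r·a·r'`. -/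
def circRel (Bg : Bialgebroid k R A) {Q : Type} [AddCommGroup Q] [Module k Q]
    (C : Comod Bg Q) : Submodule k (TensorProduct k Q A) :=
  Submodule.span k {x | ∃ (r r' : R) (q : Q) (a : A),
    x = (C.ql r (C.qr r' q)) ⊗ₜ[k] a - q ⊗ₜ[k] (Bg.src r * (Bg.tgt r' * a))}

/-- The relations of `(Q/[Q,R]) ⊗_R A`. -/
def targRel (Bg : Bialgebroid k R A) {Q : Type} [AddCommGroup Q] [Module k Q]
    (C : Comod Bg Q) : Submodule k (TensorProduct k Q A) :=
  Submodule.span k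
    ({x | ∃ (r : R) (q : Q) (a : A), x = (C.ql r q) ⊗ₜ[k] a - (C.qr r q) ⊗ₜ[k] a} ∪
     {x | ∃ (r : R) (q : Q) (a : A), x = (C.qr r q) ⊗ₜ[k] a - q ⊗ₜ[k] (Bg.src r * a)})

namespace Stmt9Aux

lemma mapSpanMem {M N : Type} [AddCommGroup M] [Module k M]
    [AddCommGroup N] [Module k N]
    (φ : M →ₗ[k] N) {s : Set M} {T : Submodule k N}
    (h : ∀ y ∈ s, φ y ∈ T) {x : M} (hx : x ∈ Submodule.span k s) : φ x ∈ T := by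
  have hle : Submodule.span k s ≤ T.comap φ := Submodule.span_le.mpr h
  exact hle hx

lemma tensorMem {M N P : Type} [AddCommGroup M] [Module k M]
    [AddCommGroup N] [Module k N] [AddCommGroup P] [Module k P]
    (φ : TensorProduct k M N →ₗ[k] P) (T : Submodule k P)
    (h : ∀ m n, φ (m ⊗ₜ[k] n) ∈ T) (z : TensorProduct k M N) : φ z ∈ T := by
  induction z using TensorProduct.induction_on with
  | zero => rw [map_zero]; exact T.zero_mem
  | tmul m n => exact h m n
  | add x y hx hy => rw [map_add]; exact T.add_mem hx hy

variable (Bg : Bialgebroid k R A) {Q : Type} [AddCommGroup Q] [Module k Q]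
  (C : Comod Bg Q)

lemma mulFlip (a : A) : (LinearMap.mul k A).flip a = LinearMap.mulRight k a := by
  ext b; simp

/-- The map `q ⊗ a ↦ q₀ ⊗ q₁ a`. -/
noncomputable def fA : TensorProduct k Q A →ₗ[k] TensorProduct k Q A :=
  TensorProduct.lift
    (((LinearMap.lTensorHom Q ∘ₗ (LinearMap.mul k A).flip).flip) ∘ₗ C.coact)

lemma fA_tmul (q : Q) (a : A) :
    fA Bg C (q ⊗ₜ[k] a)
      = LinearMap.lTensor Q (LinearMap.mulRight k a) (C.coact q) := by
  simp [fA, mulFlip, LinearMap.lTensorHom]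

/-- The map `q ⊗ a ↦ q₀ ⊗ S(q₁) a`. -/
noncomputable def gA (S : A →ₗ[k] A) :
    TensorProduct k Q A →ₗ[k] TensorProduct k Q A :=
  TensorProduct.lift
    (((LinearMap.lTensorHom Q ∘ₗ (LinearMap.lcomp k A S) ∘ₗ
        (LinearMap.mul k A).flip).flip) ∘ₗ C.coact)

lemma gA_tmul (S : A →ₗ[k] A) (q : Q) (a : A) :
    gA Bg C S (q ⊗ₜ[k] a)
      = LinearMap.lTensor Q ((LinearMap.mulRight k a) ∘ₗ S) (C.coact q) := by
  simp only [gA, TensorProduct.lift.tmul, LinearMap.comp_apply, LinearMap.flip_apply,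
    LinearMap.lcomp_apply']
  rw [mulFlip]
  rfl

noncomputable def th1 (S : A →ₗ[k] A) (a : A) :
    TensorProduct k Q (TensorProduct k A A) →ₗ[k] TensorProduct k Q A :=
  LinearMap.lTensor Q
    (LinearMap.mulRight k a ∘ₗ LinearMap.mul' k A ∘ₗ LinearMap.rTensor A S)

noncomputable def th2 (S : A →ₗ[k] A) (a : A) :
    TensorProduct k Q (TensorProduct k A A) →ₗ[k] TensorProduct k Q A :=
  LinearMap.lTensor Q
    (LinearMap.mulRight k a ∘ₗ LinearMap.mul' k A ∘ₗ LinearMap.lTensor A S)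

lemma circ_gen1 (r : R) (p : Q) (x : A) :
    (C.qr r p) ⊗ₜ[k] x - p ⊗ₜ[k] (Bg.tgt r * x) ∈ circRel Bg C :=
  Submodule.subset_span ⟨1, r, p, x, by simp⟩

lemma circ_gen2 (r : R) (p : Q) (x : A) :
    (C.ql r p) ⊗ₜ[k] x - p ⊗ₜ[k] (Bg.src r * x) ∈ circRel Bg C :=
  Submodule.subset_span ⟨r, 1, p, x, by simp⟩

lemma targ_gen1 (r : R) (p : Q) (x : A) :
    (C.ql r p) ⊗ₜ[k] x - (C.qr r p) ⊗ₜ[k] x ∈ targRel Bg C :=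
  Submodule.subset_span (Or.inl ⟨r, p, x, rfl⟩)

lemma targ_gen2 (r : R) (p : Q) (x : A) :
    (C.qr r p) ⊗ₜ[k] x - p ⊗ₜ[k] (Bg.src r * x) ∈ targRel Bg C :=
  Submodule.subset_span (Or.inr ⟨r, p, x, rfl⟩)

lemma targ_gen3 (r : R) (p : Q) (x : A) :
    (C.ql r p) ⊗ₜ[k] x - p ⊗ₜ[k] (Bg.src r * x) ∈ targRel Bg C := by
  have h := add_mem (targ_gen1 Bg C r p x) (targ_gen2 Bg C r p x)
  rwa [sub_add_sub_cancel] at h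

/-- The relation set appearing in `coact_left`/`coact_right`. -/
def Wset : Set (TensorProduct k Q A) :=
  {x | ∃ (r' : R) (p : Q) (c : A),
    x = (C.qr r' p) ⊗ₜ[k] c - p ⊗ₜ[k] (Bg.src r' * c)}

lemma W_targ (a : A) : ∀ y ∈ Wset Bg C,
    LinearMap.lTensor Q (LinearMap.mulRight k a) y ∈ targRel Bg C := by
  rintro y ⟨r, p, c, rfl⟩
  rw [map_sub]
  simp only [LinearMap.lTensor_tmul, LinearMap.mulRight_apply]
  simp only [mul_assoc]
  exact targ_gen2 Bg C r p (c * a)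

lemma W_circ (S : A →ₗ[k] A)
    (hS1 : ∀ (a : A) (r : R), S (a * Bg.src r) = Bg.tgt r * S a) (a : A) :
    ∀ y ∈ Wset Bg C,
    LinearMap.lTensor Q (LinearMap.mulRight k a ∘ₗ S) y ∈ circRel Bg C := by
  rintro y ⟨r, p, c, rfl⟩
  rw [map_sub]
  simp only [LinearMap.lTensor_tmul, LinearMap.comp_apply, LinearMap.mulRight_apply]
  rw [show Bg.src r * c = c * Bg.src r from Bg.src_central r c, hS1]
  simpa [mul_assoc] using circ_gen1 Bg C r p (S c * a)

lemma W_W (r : R) : ∀ y ∈ Wset Bg C,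
    LinearMap.rTensor A (C.ql r) y ∈ Submodule.span k (Wset Bg C) := by
  rintro y ⟨r', p, c, rfl⟩
  rw [map_sub]
  simp only [LinearMap.rTensor_tmul]
  rw [C.actcomm]
  exact Submodule.subset_span ⟨r', C.ql r p, c, rfl⟩

lemma W3_circ (S : A →ₗ[k] A)
    (hS1 : ∀ (a : A) (r : R), S (a * Bg.src r) = Bg.tgt r * S a)
    (hS2 : ∀ (a : A) (r : R), S (Bg.tgt r * a) = S a * Bg.src r) (a : A) :
    ∀ y ∈ ({x | ∃ (r : R) (p : Q) (c d : A),
        x = (C.qr r p) ⊗ₜ[k] (c ⊗ₜ[k] d) - p ⊗ₜ[k] ((Bg.src r * c) ⊗ₜ[k] d)} ∪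
      {x | ∃ (r : R) (p : Q) (c d : A),
        x = p ⊗ₜ[k] ((Bg.tgt r * c) ⊗ₜ[k] d) - p ⊗ₜ[k] (c ⊗ₜ[k] (Bg.src r * d))} :
        Set (TensorProduct k Q (TensorProduct k A A))),
      th1 (Q := Q) S a y ∈ circRel Bg C := by
  rintro y (⟨r, p, c, d, rfl⟩ | ⟨r, p, c, d, rfl⟩)
  · rw [map_sub]
    simp only [th1, LinearMap.lTensor_tmul, LinearMap.comp_apply,
      LinearMap.rTensor_tmul, LinearMap.mul'_apply, LinearMap.mulRight_apply]
    rw [show Bg.src r * c = c * Bg.src r from Bg.src_central r c, hS1]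
    simpa [mul_assoc] using circ_gen1 Bg C r p (S c * (d * a))
  · rw [map_sub]
    simp only [th1, LinearMap.lTensor_tmul, LinearMap.comp_apply,
      LinearMap.rTensor_tmul, LinearMap.mul'_apply, LinearMap.mulRight_apply]
    rw [hS2]
    simp only [mul_assoc, sub_self]
    exact (circRel Bg C).zero_mem

lemma W3_targ (S : A →ₗ[k] A)
    (hS1 : ∀ (a : A) (r : R), S (a * Bg.src r) = Bg.tgt r * S a) (a : A) :
    ∀ y ∈ ({x | ∃ (r : R) (p : Q) (c d : A),
        x = (C.qr r p) ⊗ₜ[k] (c ⊗ₜ[k] d) - p ⊗ₜ[k] ((Bg.src r * c) ⊗ₜ[k] d)} ∪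
      {x | ∃ (r : R) (p : Q) (c d : A),
        x = p ⊗ₜ[k] ((Bg.tgt r * c) ⊗ₜ[k] d) - p ⊗ₜ[k] (c ⊗ₜ[k] (Bg.src r * d))} :
        Set (TensorProduct k Q (TensorProduct k A A))),
      th2 (Q := Q) S a y ∈ targRel Bg C := by
  rintro y (⟨r, p, c, d, rfl⟩ | ⟨r, p, c, d, rfl⟩)
  · rw [map_sub]
    simp only [th2, LinearMap.lTensor_tmul, LinearMap.comp_apply,
      LinearMap.mul'_apply, LinearMap.mulRight_apply]
    simpa [mul_assoc] using targ_gen2 Bg C r p (c * (S d * a))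
  · rw [map_sub]
    simp only [th2, LinearMap.lTensor_tmul, LinearMap.comp_apply,
      LinearMap.mul'_apply, LinearMap.mulRight_apply]
    rw [show Bg.src r * d = d * Bg.src r from Bg.src_central r d, hS1,
      show Bg.tgt r * c = c * Bg.tgt r from Bg.tgt_central r c]
    simp only [mul_assoc, sub_self]
    exact (targRel Bg C).zero_mem

lemma fA_desc : ∀ x ∈ circRel Bg C, fA Bg C x ∈ targRel Bg C := by
  intro x hx
  refine mapSpanMem (fA Bg C) ?_ hx
  rintro y ⟨r, r', p, a, rfl⟩
  rw [map_sub, fA_tmul, fA_tmul]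
  have h1 : C.coact (C.ql r (C.qr r' p))
      - LinearMap.rTensor A (C.ql r) (C.coact (C.qr r' p))
      ∈ Submodule.span k (Wset Bg C) :=
    (Submodule.Quotient.eq _).mp (C.coact_left r (C.qr r' p))
  have h2 : C.coact (C.qr r' p)
      - LinearMap.lTensor Q (LinearMap.mulLeft k (Bg.tgt r')) (C.coact p)
      ∈ Submodule.span k (Wset Bg C) :=
    (Submodule.Quotient.eq _).mp (C.coact_right r' p)
  have h2' : LinearMap.rTensor A (C.ql r) (C.coact (C.qr r' p))
      - LinearMap.rTensor A (C.ql r)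
        (LinearMap.lTensor Q (LinearMap.mulLeft k (Bg.tgt r')) (C.coact p))
      ∈ Submodule.span k (Wset Bg C) := by
    rw [← map_sub]; exact mapSpanMem _ (W_W Bg C r) h2
  have h12 := add_mem h1 h2'
  rw [sub_add_sub_cancel] at h12
  have h3 : LinearMap.lTensor Q (LinearMap.mulRight k a) (C.coact (C.ql r (C.qr r' p)))
      - LinearMap.lTensor Q (LinearMap.mulRight k a)
        (LinearMap.rTensor A (C.ql r)
          (LinearMap.lTensor Q (LinearMap.mulLeft k (Bg.tgt r')) (C.coact p)))
      ∈ targRel Bg C := by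
    rw [← map_sub]; exact mapSpanMem _ (W_targ Bg C a) h12
  have h4 : LinearMap.lTensor Q (LinearMap.mulRight k a)
        (LinearMap.rTensor A (C.ql r)
          (LinearMap.lTensor Q (LinearMap.mulLeft k (Bg.tgt r')) (C.coact p)))
      - LinearMap.lTensor Q (LinearMap.mulRight k (Bg.src r * (Bg.tgt r' * a)))
          (C.coact p)
      ∈ targRel Bg C := by
    have key := tensorMem
      ((LinearMap.lTensor Q (LinearMap.mulRight k a)) ∘ₗ
        (LinearMap.rTensor A (C.ql r)) ∘ₗ
        (LinearMap.lTensor Q (LinearMap.mulLeft k (Bg.tgt r')))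
       - LinearMap.lTensor Q (LinearMap.mulRight k (Bg.src r * (Bg.tgt r' * a))))
      (targRel Bg C) ?_ (C.coact p)
    · simp only [LinearMap.sub_apply, LinearMap.comp_apply] at key
      exact key
    · intro p' b
      simp only [LinearMap.sub_apply, LinearMap.comp_apply, LinearMap.lTensor_tmul,
        LinearMap.rTensor_tmul, LinearMap.mulLeft_apply, LinearMap.mulRight_apply]
      have hc : b * (Bg.src r * (Bg.tgt r' * a)) = Bg.src r * (Bg.tgt r' * b * a) := by
        rw [← mul_assoc, ← Bg.src_central, mul_assoc, mul_assoc,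
          ← mul_assoc b, ← Bg.tgt_central, mul_assoc]
      rw [hc]
      exact targ_gen3 Bg C r p' (Bg.tgt r' * b * a)
  have h := add_mem h3 h4
  rwa [sub_add_sub_cancel] at h

lemma gA_desc (S : A →ₗ[k] A)
    (hS1 : ∀ (a : A) (r : R), S (a * Bg.src r) = Bg.tgt r * S a)
    (hS2 : ∀ (a : A) (r : R), S (Bg.tgt r * a) = S a * Bg.src r) :
    ∀ x ∈ targRel Bg C, gA Bg C S x ∈ circRel Bg C := by
  intro x hx
  refine mapSpanMem (gA Bg C S) ?_ hx
  rintro y (⟨r, p, a, rfl⟩ | ⟨r, p, a, rfl⟩)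
  · rw [map_sub, gA_tmul, gA_tmul]
    have h1 : C.coact (C.ql r p) - LinearMap.rTensor A (C.ql r) (C.coact p)
        ∈ Submodule.span k (Wset Bg C) :=
      (Submodule.Quotient.eq _).mp (C.coact_left r p)
    have h2 : C.coact (C.qr r p)
        - LinearMap.lTensor Q (LinearMap.mulLeft k (Bg.tgt r)) (C.coact p)
        ∈ Submodule.span k (Wset Bg C) :=
      (Submodule.Quotient.eq _).mp (C.coact_right r p)
    have m1 : LinearMap.lTensor Q (LinearMap.mulRight k a ∘ₗ S) (C.coact (C.ql r p))
        - LinearMap.lTensor Q (LinearMap.mulRight k a ∘ₗ S)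
            (LinearMap.rTensor A (C.ql r) (C.coact p)) ∈ circRel Bg C := by
      rw [← map_sub]; exact mapSpanMem _ (W_circ Bg C S hS1 a) h1
    have m2 : LinearMap.lTensor Q (LinearMap.mulRight k a ∘ₗ S) (C.coact (C.qr r p))
        - LinearMap.lTensor Q (LinearMap.mulRight k a ∘ₗ S)
            (LinearMap.lTensor Q (LinearMap.mulLeft k (Bg.tgt r)) (C.coact p))
        ∈ circRel Bg C := by
      rw [← map_sub]; exact mapSpanMem _ (W_circ Bg C S hS1 a) h2
    have m3 : LinearMap.lTensor Q (LinearMap.mulRight k a ∘ₗ S)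
          (LinearMap.rTensor A (C.ql r) (C.coact p))
        - LinearMap.lTensor Q (LinearMap.mulRight k a ∘ₗ S)
            (LinearMap.lTensor Q (LinearMap.mulLeft k (Bg.tgt r)) (C.coact p))
        ∈ circRel Bg C := by
      have key := tensorMem
        ((LinearMap.lTensor Q (LinearMap.mulRight k a ∘ₗ S)) ∘ₗ
            (LinearMap.rTensor A (C.ql r))
          - (LinearMap.lTensor Q (LinearMap.mulRight k a ∘ₗ S)) ∘ₗ
              (LinearMap.lTensor Q (LinearMap.mulLeft k (Bg.tgt r))))
        (circRel Bg C) ?_ (C.coact p)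
      · simp only [LinearMap.sub_apply, LinearMap.comp_apply] at key
        exact key
      · intro p' b
        simp only [LinearMap.sub_apply, LinearMap.comp_apply, LinearMap.lTensor_tmul,
          LinearMap.rTensor_tmul, LinearMap.mulLeft_apply, LinearMap.mulRight_apply]
        rw [hS2]
        have e : S b * Bg.src r * a = Bg.src r * (S b * a) := by
          rw [← Bg.src_central r (S b), mul_assoc]
        rw [e]
        exact circ_gen2 Bg C r p' (S b * a)
    have h := sub_mem (add_mem m1 m3) m2
    rwa [sub_add_sub_cancel, sub_sub_sub_cancel_right] at h
  · rw [map_sub, gA_tmul, gA_tmul]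
    have h2 : C.coact (C.qr r p)
        - LinearMap.lTensor Q (LinearMap.mulLeft k (Bg.tgt r)) (C.coact p)
        ∈ Submodule.span k (Wset Bg C) :=
      (Submodule.Quotient.eq _).mp (C.coact_right r p)
    have m2 : LinearMap.lTensor Q (LinearMap.mulRight k a ∘ₗ S) (C.coact (C.qr r p))
        - LinearMap.lTensor Q (LinearMap.mulRight k a ∘ₗ S)
            (LinearMap.lTensor Q (LinearMap.mulLeft k (Bg.tgt r)) (C.coact p))
        ∈ circRel Bg C := by
      rw [← map_sub]; exact mapSpanMem _ (W_circ Bg C S hS1 a) h2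
    have m4 : LinearMap.lTensor Q (LinearMap.mulRight k a ∘ₗ S)
          (LinearMap.lTensor Q (LinearMap.mulLeft k (Bg.tgt r)) (C.coact p))
        - LinearMap.lTensor Q (LinearMap.mulRight k (Bg.src r * a) ∘ₗ S) (C.coact p)
        ∈ circRel Bg C := by
      have key := tensorMem
        ((LinearMap.lTensor Q (LinearMap.mulRight k a ∘ₗ S)) ∘ₗ
            (LinearMap.lTensor Q (LinearMap.mulLeft k (Bg.tgt r)))
          - LinearMap.lTensor Q (LinearMap.mulRight k (Bg.src r * a) ∘ₗ S))
        (circRel Bg C) ?_ (C.coact p)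
      · simp only [LinearMap.sub_apply, LinearMap.comp_apply] at key
        exact key
      · intro p' b
        simp only [LinearMap.sub_apply, LinearMap.comp_apply, LinearMap.lTensor_tmul,
          LinearMap.mulLeft_apply, LinearMap.mulRight_apply]
        rw [hS2]
        simp only [mul_assoc, sub_self]
        exact (circRel Bg C).zero_mem
    have h := add_mem m2 m4
    rwa [sub_add_sub_cancel] at h

lemma A1 (S : A →ₗ[k] A) (q : Q) (a : A) :
    gA Bg C S (fA Bg C (q ⊗ₜ[k] a))
      = th1 (Q := Q) S a ((TensorProduct.assoc k Q A A)
          (LinearMap.rTensor A C.coact (C.coact q))) := by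
  rw [fA_tmul]
  generalize C.coact q = z
  induction z using TensorProduct.induction_on with
  | zero => simp
  | tmul p c =>
    rw [LinearMap.lTensor_tmul, LinearMap.mulRight_apply, gA_tmul,
      LinearMap.rTensor_tmul]
    generalize C.coact p = u
    induction u using TensorProduct.induction_on with
    | zero => simp
    | tmul p' b => simp [th1, mul_assoc]
    | add x y hx hy =>
      rw [map_add, TensorProduct.add_tmul, map_add, map_add, hx, hy]
  | add x y hx hy =>
    simp only [map_add, hx, hy]

lemma B1 (S : A →ₗ[k] A) (q : Q) (a : A) :
    fA Bg C (gA Bg C S (q ⊗ₜ[k] a))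
      = th2 (Q := Q) S a ((TensorProduct.assoc k Q A A)
          (LinearMap.rTensor A C.coact (C.coact q))) := by
  rw [gA_tmul]
  generalize C.coact q = z
  induction z using TensorProduct.induction_on with
  | zero => simp
  | tmul p c =>
    rw [LinearMap.lTensor_tmul, LinearMap.comp_apply, LinearMap.mulRight_apply,
      fA_tmul, LinearMap.rTensor_tmul]
    generalize C.coact p = u
    induction u using TensorProduct.induction_on with
    | zero => simp
    | tmul p' b => simp [th2, mul_assoc]
    | add x y hx hy =>
      rw [map_add, TensorProduct.add_tmul, map_add, map_add, hx, hy]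
  | add x y hx hy =>
    simp only [map_add, hx, hy]

lemma A3 (S : A →ₗ[k] A)
    (hS4 : ∀ a : A,
      LinearMap.mul' k A ((LinearMap.rTensor A S) (Bg.comul a)) = Bg.tgt (Bg.counit a))
    (a : A) (z : TensorProduct k Q A) :
    th1 (Q := Q) S a (LinearMap.lTensor Q Bg.comul z)
      = LinearMap.lTensor Q
          (LinearMap.mulRight k a ∘ₗ (Bg.tgt.toLinearMap ∘ₗ Bg.counit.toLinearMap)) z := by
  have hmap : (LinearMap.mulRight k a ∘ₗ LinearMap.mul' k A ∘ₗ LinearMap.rTensor A S) ∘ₗ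
      Bg.comul = LinearMap.mulRight k a ∘ₗ (Bg.tgt.toLinearMap ∘ₗ Bg.counit.toLinearMap) := by
    ext b
    simp [hS4 b]
  rw [th1, ← LinearMap.lTensor_comp_apply, hmap]

lemma B3 (S : A →ₗ[k] A)
    (hS3 : ∀ a : A,
      LinearMap.mul' k A ((LinearMap.lTensor A S) (Bg.comul a)) = Bg.src (Bg.counit a))
    (a : A) (z : TensorProduct k Q A) :
    th2 (Q := Q) S a (LinearMap.lTensor Q Bg.comul z)
      = LinearMap.lTensor Q
          (LinearMap.mulRight k a ∘ₗ (Bg.src.toLinearMap ∘ₗ Bg.counit.toLinearMap)) z := by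
  have hmap : (LinearMap.mulRight k a ∘ₗ LinearMap.mul' k A ∘ₗ LinearMap.lTensor A S) ∘ₗ
      Bg.comul = LinearMap.mulRight k a ∘ₗ (Bg.src.toLinearMap ∘ₗ Bg.counit.toLinearMap) := by
    ext b
    simp [hS3 b]
  rw [th2, ← LinearMap.lTensor_comp_apply, hmap]

lemma A4 (a : A) (q : Q) :
    LinearMap.lTensor Q
        (LinearMap.mulRight k a ∘ₗ (Bg.tgt.toLinearMap ∘ₗ Bg.counit.toLinearMap))
        (C.coact q) - q ⊗ₜ[k] a ∈ circRel Bg C := by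
  have hq := C.counital q
  set ξ : TensorProduct k Q A →ₗ[k] Q :=
    TensorProduct.lift
      (LinearMap.flip ((C.qr.toLinearMap : R →ₗ[k] Module.End k Q) ∘ₗ
        Bg.counit.toLinearMap)) with hξ
  have key := tensorMem
    (LinearMap.lTensor Q
        (LinearMap.mulRight k a ∘ₗ (Bg.tgt.toLinearMap ∘ₗ Bg.counit.toLinearMap))
      - ((TensorProduct.mk k Q A).flip a) ∘ₗ ξ) (circRel Bg C) ?_ (C.coact q)
  · rw [LinearMap.sub_apply, LinearMap.comp_apply, hq] at key
    simpa using key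
  · intro p b
    simp only [LinearMap.sub_apply, LinearMap.comp_apply, LinearMap.lTensor_tmul,
      hξ, TensorProduct.lift.tmul, LinearMap.flip_apply, AlgHom.toLinearMap_apply,
      LinearMap.mulRight_apply, TensorProduct.mk_apply]
    have h := neg_mem (circ_gen1 Bg C (Bg.counit b) p a)
    simpa [neg_sub] using h

lemma B4 (a : A) (q : Q) :
    LinearMap.lTensor Q
        (LinearMap.mulRight k a ∘ₗ (Bg.src.toLinearMap ∘ₗ Bg.counit.toLinearMap))
        (C.coact q) - q ⊗ₜ[k] a ∈ targRel Bg C := by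
  have hq := C.counital q
  set ξ : TensorProduct k Q A →ₗ[k] Q :=
    TensorProduct.lift
      (LinearMap.flip ((C.qr.toLinearMap : R →ₗ[k] Module.End k Q) ∘ₗ
        Bg.counit.toLinearMap)) with hξ
  have key := tensorMem
    (LinearMap.lTensor Q
        (LinearMap.mulRight k a ∘ₗ (Bg.src.toLinearMap ∘ₗ Bg.counit.toLinearMap))
      - ((TensorProduct.mk k Q A).flip a) ∘ₗ ξ) (targRel Bg C) ?_ (C.coact q)
  · rw [LinearMap.sub_apply, LinearMap.comp_apply, hq] at key
    simpa using key
  · intro p b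
    simp only [LinearMap.sub_apply, LinearMap.comp_apply, LinearMap.lTensor_tmul,
      hξ, TensorProduct.lift.tmul, LinearMap.flip_apply, AlgHom.toLinearMap_apply,
      LinearMap.mulRight_apply, TensorProduct.mk_apply]
    have h := neg_mem (targ_gen2 Bg C (Bg.counit b) p a)
    simpa [neg_sub] using h

lemma gf_mem (S : A →ₗ[k] A)
    (hS1 : ∀ (a : A) (r : R), S (a * Bg.src r) = Bg.tgt r * S a)
    (hS2 : ∀ (a : A) (r : R), S (Bg.tgt r * a) = S a * Bg.src r)
    (hS4 : ∀ a : A,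
      LinearMap.mul' k A ((LinearMap.rTensor A S) (Bg.comul a)) = Bg.tgt (Bg.counit a))
    (q : Q) (a : A) :
    gA Bg C S (fA Bg C (q ⊗ₜ[k] a)) - q ⊗ₜ[k] a ∈ circRel Bg C := by
  have e1 := A1 Bg C S q a
  have m2 : th1 (Q := Q) S a ((TensorProduct.assoc k Q A A)
        (LinearMap.rTensor A C.coact (C.coact q)))
      - th1 (Q := Q) S a (LinearMap.lTensor Q Bg.comul (C.coact q)) ∈ circRel Bg C := by
    rw [← map_sub]
    exact mapSpanMem _ (W3_circ Bg C S hS1 hS2 a)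
      ((Submodule.Quotient.eq _).mp (C.coassoc q))
  have m4 := A4 Bg C a q
  rw [← A3 Bg (Q := Q) S hS4 a (C.coact q)] at m4
  rw [e1]
  have h := add_mem m2 m4
  rwa [sub_add_sub_cancel] at h

lemma fg_mem (S : A →ₗ[k] A)
    (hS1 : ∀ (a : A) (r : R), S (a * Bg.src r) = Bg.tgt r * S a)
    (hS3 : ∀ a : A,
      LinearMap.mul' k A ((LinearMap.lTensor A S) (Bg.comul a)) = Bg.src (Bg.counit a))
    (q : Q) (a : A) :
    fA Bg C (gA Bg C S (q ⊗ₜ[k] a)) - q ⊗ₜ[k] a ∈ targRel Bg C := by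
  have e1 := B1 Bg C S q a
  have m2 : th2 (Q := Q) S a ((TensorProduct.assoc k Q A A)
        (LinearMap.rTensor A C.coact (C.coact q)))
      - th2 (Q := Q) S a (LinearMap.lTensor Q Bg.comul (C.coact q)) ∈ targRel Bg C := by
    rw [← map_sub]
    exact mapSpanMem _ (W3_targ Bg C S hS1 a)
      ((Submodule.Quotient.eq _).mp (C.coassoc q))
  have m4 := B4 Bg C a q
  rw [← B3 Bg (Q := Q) S hS3 a (C.coact q)] at m4
  rw [e1]
  have h := add_mem m2 m4
  rwa [sub_add_sub_cancel] at h

end Stmt9Aux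

open Stmt9Aux

/-- For a Hopf algebroid (bialgebroid with antipode `S`) and any right comodule `Q`,
the canonical map `ς_Q : Q ∘ A → (Q/[Q,R]) ⊗_R A`, `q ∘ a ↦ [q₀] ⊗ q₁ a`, is an
isomorphism, with inverse `[q] ⊗ a ↦ q₀ ∘ S(q₁) a`. -/
theorem stmt9 (Bg : Bialgebroid k R A) (S : A →ₗ[k] A)
    (hS1 : ∀ (a : A) (r : R), S (a * Bg.src r) = Bg.tgt r * S a)
    (hS2 : ∀ (a : A) (r : R), S (Bg.tgt r * a) = S a * Bg.src r)
    (hS3 : ∀ a : A,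
      LinearMap.mul' k A ((LinearMap.lTensor A S) (Bg.comul a)) = Bg.src (Bg.counit a))
    (hS4 : ∀ a : A,
      LinearMap.mul' k A ((LinearMap.rTensor A S) (Bg.comul a)) = Bg.tgt (Bg.counit a))
    (Q : Type) [AddCommGroup Q] [Module k Q] (C : Comod Bg Q) :
    ∃ σ : (TensorProduct k Q A ⧸ circRel Bg C) ≃ₗ[k]
          (TensorProduct k Q A ⧸ targRel Bg C),
      (∀ (q : Q) (a : A),
        σ (Submodule.Quotient.mk (q ⊗ₜ[k] a)) =
          Submodule.Quotient.mk
            ((LinearMap.lTensor Q (LinearMap.mulRight k a)) (C.coact q))) ∧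
      (∀ (q : Q) (a : A),
        σ.symm (Submodule.Quotient.mk (q ⊗ₜ[k] a)) =
          Submodule.Quotient.mk
            ((LinearMap.lTensor Q ((LinearMap.mulRight k a) ∘ₗ S)) (C.coact q))) := by
  have hf : circRel Bg C ≤ (targRel Bg C).comap (fA Bg C) :=
    fun x hx => fA_desc Bg C x hx
  have hg : targRel Bg C ≤ (circRel Bg C).comap (gA Bg C S) :=
    fun x hx => gA_desc Bg C S hS1 hS2 x hx
  set fbar := Submodule.mapQ (circRel Bg C) (targRel Bg C) (fA Bg C) hf with hfbar
  set gbar := Submodule.mapQ (targRel Bg C) (circRel Bg C) (gA Bg C S) hg with hgbar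
  have hfg : fbar ∘ₗ gbar = LinearMap.id := by
    refine Submodule.linearMap_qext _ (LinearMap.ext fun z => ?_)
    simp only [LinearMap.comp_apply, Submodule.mkQ_apply, hfbar, hgbar,
      Submodule.mapQ_apply, LinearMap.id_apply]
    rw [Submodule.Quotient.eq]
    have h := tensorMem (fA Bg C ∘ₗ gA Bg C S - LinearMap.id) (targRel Bg C)
      (fun q a => by simpa using fg_mem Bg C S hS1 hS3 q a) z
    simpa using h
  have hgf : gbar ∘ₗ fbar = LinearMap.id := by
    refine Submodule.linearMap_qext _ (LinearMap.ext fun z => ?_)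
    simp only [LinearMap.comp_apply, Submodule.mkQ_apply, hfbar, hgbar,
      Submodule.mapQ_apply, LinearMap.id_apply]
    rw [Submodule.Quotient.eq]
    have h := tensorMem (gA Bg C S ∘ₗ fA Bg C - LinearMap.id) (circRel Bg C)
      (fun q a => by simpa using gf_mem Bg C S hS1 hS2 hS4 q a) z
    simpa using h
  refine ⟨LinearEquiv.ofLinear fbar gbar hfg hgf, fun q a => ?_, fun q a => ?_⟩
  · rw [LinearEquiv.ofLinear_apply, hfbar, Submodule.mapQ_apply, fA_tmul]
  · rw [LinearEquiv.ofLinear_symm_apply, hgbar, Submodule.mapQ_apply, gA_tmul]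

end Stmt9
end

section
/- Let k be a commutative ring, R a commutative k-algebra, and A an R-bialgebroid whose source and target maps land in the center of A. Suppose the canonical map A ⋆ A → A ⊗_R A, a ⋆ b ↦ a₁ ⊗ a₂ b, is bijective, where A ⋆ A = A ⊗_k A / ⟨a·r ⊗ b − a ⊗ b·r⟩; write its inverse on a ⊗ 1 as a⁺ ⋆ a⁻. Then S(a) := t(ε(a⁺)) a⁻ defines an antipode for A: S(a s(r)) = t(r) S(a), S(t(r) a) = S(a) s(r), a₁ S(a₂) = s(ε(a)), and S(a₁) a₂ = t(ε(a)) for all a ∈ A, r ∈ R. Hence A is a Hopf algebroid. -/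
open TensorProduct

section Stmt10

variable {k R A : Type} [CommRing k] [CommRing R] [Algebra k R]
  [Ring A] [Algebra k A]

/-- The relations of `A ⋆ A = A ⊗_k A / ⟨a·r ⊗ b − a ⊗ b·r⟩`
(where `a·r = tgt r * a`). -/
def starRel (Bg : Bialgebroid k R A) : Submodule k (TensorProduct k A A) :=
  Submodule.span k {x | ∃ (r : R) (a b : A),
    x = (Bg.tgt r * a) ⊗ₜ[k] b - a ⊗ₜ[k] (Bg.tgt r * b)}

namespace Stmt10Proof

variable {k R A : Type} [CommRing k] [CommRing R] [Algebra k R]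
  [Ring A] [Algebra k A]

/-- The mixed relations in `A ⊗ (A ⊗ A)`: `corel` on legs 1,2 and
`starRel` on legs 2,3. -/
def WL (Bg : Bialgebroid k R A) :
    Submodule k (TensorProduct k A (TensorProduct k A A)) :=
  Submodule.span k
    ({x | ∃ (r : R) (b c d : A),
        x = (Bg.tgt r * b) ⊗ₜ[k] (c ⊗ₜ[k] d) - b ⊗ₜ[k] ((Bg.src r * c) ⊗ₜ[k] d)} ∪
     {x | ∃ (r : R) (b c d : A),
        x = b ⊗ₜ[k] ((Bg.tgt r * c) ⊗ₜ[k] d) - b ⊗ₜ[k] (c ⊗ₜ[k] (Bg.tgt r * d))})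

variable (Bg : Bialgebroid k R A)

lemma mem_CR (r : R) (b c : A) :
    (Bg.tgt r * b) ⊗ₜ[k] c - b ⊗ₜ[k] (Bg.src r * c) ∈ corel k R A Bg.src Bg.tgt :=
  Submodule.subset_span ⟨r, b, c, rfl⟩

lemma mem_SR (r : R) (a b : A) :
    (Bg.tgt r * a) ⊗ₜ[k] b - a ⊗ₜ[k] (Bg.tgt r * b) ∈ starRel Bg :=
  Submodule.subset_span ⟨r, a, b, rfl⟩

lemma mem_C3_1 (r : R) (b c d : A) :
    (Bg.tgt r * b) ⊗ₜ[k] (c ⊗ₜ[k] d) - b ⊗ₜ[k] ((Bg.src r * c) ⊗ₜ[k] d)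
      ∈ corel3 k R A Bg.src Bg.tgt :=
  Submodule.subset_span (Or.inl ⟨r, b, c, d, rfl⟩)

lemma mem_C3_2 (r : R) (b c d : A) :
    b ⊗ₜ[k] ((Bg.tgt r * c) ⊗ₜ[k] d) - b ⊗ₜ[k] (c ⊗ₜ[k] (Bg.src r * d))
      ∈ corel3 k R A Bg.src Bg.tgt :=
  Submodule.subset_span (Or.inr ⟨r, b, c, d, rfl⟩)

lemma mem_WL1 (r : R) (b c d : A) :
    (Bg.tgt r * b) ⊗ₜ[k] (c ⊗ₜ[k] d) - b ⊗ₜ[k] ((Bg.src r * c) ⊗ₜ[k] d) ∈ WL Bg :=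
  Submodule.subset_span (Or.inl ⟨r, b, c, d, rfl⟩)

lemma mem_WL2 (r : R) (b c d : A) :
    b ⊗ₜ[k] ((Bg.tgt r * c) ⊗ₜ[k] d) - b ⊗ₜ[k] (c ⊗ₜ[k] (Bg.tgt r * d)) ∈ WL Bg :=
  Submodule.subset_span (Or.inr ⟨r, b, c, d, rfl⟩)

lemma CR_mul_left {x : TensorProduct k A A} (hx : x ∈ corel k R A Bg.src Bg.tgt)
    (w : TensorProduct k A A) : w * x ∈ corel k R A Bg.src Bg.tgt := by
  induction hx using Submodule.span_induction with
  | mem g hg =>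
    obtain ⟨r, b, c, rfl⟩ := hg
    induction w using TensorProduct.induction_on with
    | zero => simpa using (corel k R A Bg.src Bg.tgt).zero_mem
    | tmul p q =>
      rw [mul_sub, Algebra.TensorProduct.tmul_mul_tmul,
        Algebra.TensorProduct.tmul_mul_tmul]
      have h1 : p * (Bg.tgt r * b) = Bg.tgt r * (p * b) := by
        rw [← mul_assoc, ← Bg.tgt_central r p, mul_assoc]
      have h2 : q * (Bg.src r * c) = Bg.src r * (q * c) := by
        rw [← mul_assoc, ← Bg.src_central r q, mul_assoc]
      rw [h1, h2]
      exact mem_CR Bg r (p * b) (q * c)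
    | add w1 w2 h1 h2 => rw [add_mul]; exact add_mem h1 h2
  | zero => simpa using (corel k R A Bg.src Bg.tgt).zero_mem
  | add x y hx hy ih1 ih2 => rw [mul_add]; exact add_mem ih1 ih2
  | smul a x hx ih => rw [mul_smul_comm]; exact Submodule.smul_mem _ _ ih

lemma CR_mul_right {x : TensorProduct k A A} (hx : x ∈ corel k R A Bg.src Bg.tgt)
    (w : TensorProduct k A A) : x * w ∈ corel k R A Bg.src Bg.tgt := by
  induction hx using Submodule.span_induction with
  | mem g hg =>
    obtain ⟨r, b, c, rfl⟩ := hg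
    induction w using TensorProduct.induction_on with
    | zero => simpa using (corel k R A Bg.src Bg.tgt).zero_mem
    | tmul p q =>
      rw [sub_mul, Algebra.TensorProduct.tmul_mul_tmul,
        Algebra.TensorProduct.tmul_mul_tmul, mul_assoc, mul_assoc]
      exact mem_CR Bg r (b * p) (c * q)
    | add w1 w2 h1 h2 => rw [mul_add]; exact add_mem h1 h2
  | zero => simpa using (corel k R A Bg.src Bg.tgt).zero_mem
  | add x y hx hy ih1 ih2 => rw [add_mul]; exact add_mem ih1 ih2
  | smul a x hx ih => rw [smul_mul_assoc]; exact Submodule.smul_mem _ _ ih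

lemma SR_mul_left {x : TensorProduct k A A} (hx : x ∈ starRel Bg)
    (w : TensorProduct k A A) : w * x ∈ starRel Bg := by
  induction hx using Submodule.span_induction with
  | mem g hg =>
    obtain ⟨r, b, c, rfl⟩ := hg
    induction w using TensorProduct.induction_on with
    | zero => simpa using (starRel Bg).zero_mem
    | tmul p q =>
      rw [mul_sub, Algebra.TensorProduct.tmul_mul_tmul,
        Algebra.TensorProduct.tmul_mul_tmul]
      have h1 : p * (Bg.tgt r * b) = Bg.tgt r * (p * b) := by
        rw [← mul_assoc, ← Bg.tgt_central r p, mul_assoc]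
      have h2 : q * (Bg.tgt r * c) = Bg.tgt r * (q * c) := by
        rw [← mul_assoc, ← Bg.tgt_central r q, mul_assoc]
      rw [h1, h2]
      exact mem_SR Bg r (p * b) (q * c)
    | add w1 w2 h1 h2 => rw [add_mul]; exact add_mem h1 h2
  | zero => simpa using (starRel Bg).zero_mem
  | add x y hx hy ih1 ih2 => rw [mul_add]; exact add_mem ih1 ih2
  | smul a x hx ih => rw [mul_smul_comm]; exact Submodule.smul_mem _ _ ih

lemma SR_mul_right {x : TensorProduct k A A} (hx : x ∈ starRel Bg)
    (w : TensorProduct k A A) : x * w ∈ starRel Bg := by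
  induction hx using Submodule.span_induction with
  | mem g hg =>
    obtain ⟨r, b, c, rfl⟩ := hg
    induction w using TensorProduct.induction_on with
    | zero => simpa using (starRel Bg).zero_mem
    | tmul p q =>
      rw [sub_mul, Algebra.TensorProduct.tmul_mul_tmul,
        Algebra.TensorProduct.tmul_mul_tmul, mul_assoc, mul_assoc]
      exact mem_SR Bg r (b * p) (c * q)
    | add w1 w2 h1 h2 => rw [mul_add]; exact add_mem h1 h2
  | zero => simpa using (starRel Bg).zero_mem
  | add x y hx hy ih1 ih2 => rw [add_mul]; exact add_mem ih1 ih2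
  | smul a x hx ih => rw [smul_mul_assoc]; exact Submodule.smul_mem _ _ ih

lemma C3_mul_right {x : TensorProduct k A (TensorProduct k A A)}
    (hx : x ∈ corel3 k R A Bg.src Bg.tgt)
    (w : TensorProduct k A (TensorProduct k A A)) :
    x * w ∈ corel3 k R A Bg.src Bg.tgt := by
  induction hx using Submodule.span_induction with
  | mem g hg =>
    induction w using TensorProduct.induction_on with
    | zero => simpa using (corel3 k R A Bg.src Bg.tgt).zero_mem
    | tmul p y =>
      obtain (⟨r, b, c, d, rfl⟩ | ⟨r, b, c, d, rfl⟩) := hg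
      · induction y using TensorProduct.induction_on with
        | zero => simpa using (corel3 k R A Bg.src Bg.tgt).zero_mem
        | tmul u v =>
          rw [sub_mul, Algebra.TensorProduct.tmul_mul_tmul,
            Algebra.TensorProduct.tmul_mul_tmul,
            Algebra.TensorProduct.tmul_mul_tmul,
            Algebra.TensorProduct.tmul_mul_tmul, mul_assoc, mul_assoc]
          exact mem_C3_1 Bg r (b * p) (c * u) (d * v)
        | add y1 y2 h1 h2 =>
          have e : (p : A) ⊗ₜ[k] (y1 + y2) = p ⊗ₜ[k] y1 + p ⊗ₜ[k] y2 :=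
            tmul_add p y1 y2
          rw [e, mul_add]
          exact add_mem h1 h2
      · induction y using TensorProduct.induction_on with
        | zero => simpa using (corel3 k R A Bg.src Bg.tgt).zero_mem
        | tmul u v =>
          rw [sub_mul, Algebra.TensorProduct.tmul_mul_tmul,
            Algebra.TensorProduct.tmul_mul_tmul,
            Algebra.TensorProduct.tmul_mul_tmul,
            Algebra.TensorProduct.tmul_mul_tmul, mul_assoc, mul_assoc]
          exact mem_C3_2 Bg r (b * p) (c * u) (d * v)
        | add y1 y2 h1 h2 =>
          have e : (p : A) ⊗ₜ[k] (y1 + y2) = p ⊗ₜ[k] y1 + p ⊗ₜ[k] y2 :=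
            tmul_add p y1 y2
          rw [e, mul_add]
          exact add_mem h1 h2
    | add w1 w2 h1 h2 => rw [mul_add]; exact add_mem h1 h2
  | zero => simpa using (corel3 k R A Bg.src Bg.tgt).zero_mem
  | add x y hx hy ih1 ih2 => rw [add_mul]; exact add_mem ih1 ih2
  | smul a x hx ih => rw [smul_mul_assoc]; exact Submodule.smul_mem _ _ ih

lemma tmul_SR_WL {u : TensorProduct k A A} (hu : u ∈ starRel Bg) (x : A) :
    x ⊗ₜ[k] u ∈ WL Bg := by
  induction hu using Submodule.span_induction with
  | mem g hg =>
    obtain ⟨r, a, b, rfl⟩ := hg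
    rw [tmul_sub]
    exact mem_WL2 Bg r x a b
  | zero => rw [tmul_zero]; exact (WL Bg).zero_mem
  | add y z hy hz ih1 ih2 => rw [tmul_add]; exact add_mem ih1 ih2
  | smul a y hy ih => rw [tmul_smul]; exact Submodule.smul_mem _ _ ih

lemma tmul_CR_C3 {u : TensorProduct k A A}
    (hu : u ∈ corel k R A Bg.src Bg.tgt) (x : A) :
    x ⊗ₜ[k] u ∈ corel3 k R A Bg.src Bg.tgt := by
  induction hu using Submodule.span_induction with
  | mem g hg =>
    obtain ⟨r, b, c, rfl⟩ := hg
    rw [tmul_sub]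
    exact mem_C3_2 Bg r x b c
  | zero => rw [tmul_zero]; exact (corel3 k R A Bg.src Bg.tgt).zero_mem
  | add y z hy hz ih1 ih2 => rw [tmul_add]; exact add_mem ih1 ih2
  | smul a y hy ih => rw [tmul_smul]; exact Submodule.smul_mem _ _ ih

lemma assoc_CR_WL {w : TensorProduct k A A}
    (hw : w ∈ corel k R A Bg.src Bg.tgt) (v : A) :
    (TensorProduct.assoc k A A A) (w ⊗ₜ[k] v) ∈ WL Bg := by
  induction hw using Submodule.span_induction with
  | mem g hg =>
    obtain ⟨r, b, c, rfl⟩ := hg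
    rw [sub_tmul, map_sub, assoc_tmul, assoc_tmul]
    exact mem_WL1 Bg r b c v
  | zero => rw [zero_tmul, map_zero]; exact (WL Bg).zero_mem
  | add y z hy hz ih1 ih2 => rw [add_tmul, map_add]; exact add_mem ih1 ih2
  | smul a y hy ih =>
    rw [← smul_tmul', map_smul]; exact Submodule.smul_mem _ _ ih

lemma assoc_CR_C3 {w : TensorProduct k A A}
    (hw : w ∈ corel k R A Bg.src Bg.tgt) (v : A) :
    (TensorProduct.assoc k A A A) (w ⊗ₜ[k] v) ∈ corel3 k R A Bg.src Bg.tgt := by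
  induction hw using Submodule.span_induction with
  | mem g hg =>
    obtain ⟨r, b, c, rfl⟩ := hg
    rw [sub_tmul, map_sub, assoc_tmul, assoc_tmul]
    exact mem_C3_1 Bg r b c v
  | zero => rw [zero_tmul, map_zero]; exact (corel3 k R A Bg.src Bg.tgt).zero_mem
  | add y z hy hz ih1 ih2 => rw [add_tmul, map_add]; exact add_mem ih1 ih2
  | smul a y hy ih =>
    rw [← smul_tmul', map_smul]; exact Submodule.smul_mem _ _ ih

end Stmt10Proof

namespace Stmt10Proof

variable {k R A : Type} [CommRing k] [CommRing R] [Algebra k R]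
  [Ring A] [Algebra k A]

variable (Bg : Bialgebroid k R A)

lemma qext2 {W : Submodule k (TensorProduct k A A)} {M : Type}
    [AddCommGroup M] [Module k M]
    {f g : (TensorProduct k A A ⧸ W) →ₗ[k] M}
    (h : ∀ x y : A, f (Submodule.Quotient.mk (x ⊗ₜ[k] y)) =
        g (Submodule.Quotient.mk (x ⊗ₜ[k] y))) : f = g :=
  Submodule.linearMap_qext _ (TensorProduct.ext' fun x y => by simpa using h x y)

lemma qext3 {W : Submodule k (TensorProduct k A (TensorProduct k A A))} {M : Type}
    [AddCommGroup M] [Module k M]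
    {f g : (TensorProduct k A (TensorProduct k A A) ⧸ W) →ₗ[k] M}
    (h : ∀ (x : A) (w : TensorProduct k A A),
      f (Submodule.Quotient.mk (x ⊗ₜ[k] w)) =
        g (Submodule.Quotient.mk (x ⊗ₜ[k] w))) : f = g :=
  Submodule.linearMap_qext _ (TensorProduct.ext' fun x w => by simpa using h x w)

/-- `x ⊗ y ↦ t(ε x) * y`. -/
noncomputable def m0 : TensorProduct k A A →ₗ[k] A :=
  TensorProduct.lift ((LinearMap.mul k A) ∘ₗ Bg.tgt.toLinearMap ∘ₗ Bg.counit.toLinearMap)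

@[simp] lemma m0_tmul (x y : A) :
    m0 Bg (x ⊗ₜ[k] y) = Bg.tgt (Bg.counit x) * y := by simp [m0]

/-- `x ⊗ y ↦ s(ε x) * y`. -/
noncomputable def mL0 : TensorProduct k A A →ₗ[k] A :=
  TensorProduct.lift ((LinearMap.mul k A) ∘ₗ Bg.src.toLinearMap ∘ₗ Bg.counit.toLinearMap)

@[simp] lemma mL0_tmul (x y : A) :
    mL0 Bg (x ⊗ₜ[k] y) = Bg.src (Bg.counit x) * y := by simp [mL0]

/-- The descended `m` on `A ⋆ A`. -/
noncomputable def mS : (TensorProduct k A A ⧸ starRel Bg) →ₗ[k] A :=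
  Submodule.liftQ _ (m0 Bg) (by
    rw [starRel, Submodule.span_le]
    rintro x ⟨r, a, b, rfl⟩
    simp only [SetLike.mem_coe, LinearMap.mem_ker, map_sub, m0_tmul]
    rw [Bg.counit_right, map_mul, Bg.tgt_central r (Bg.tgt (Bg.counit a)),
      mul_assoc, sub_self])

@[simp] lemma mS_mk (x : TensorProduct k A A) :
    mS Bg (Submodule.Quotient.mk x) = m0 Bg x := rfl

/-- The descended `s∘ε`-multiplication on `A ⊗_R A`. -/
noncomputable def mL : (TensorProduct k A A ⧸ corel k R A Bg.src Bg.tgt) →ₗ[k] A :=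
  Submodule.liftQ _ (mL0 Bg) (by
    rw [corel, Submodule.span_le]
    rintro x ⟨r, b, c, rfl⟩
    simp only [SetLike.mem_coe, LinearMap.mem_ker, map_sub, mL0_tmul]
    rw [Bg.counit_right, map_mul, Bg.src_central r (Bg.src (Bg.counit b)),
      mul_assoc, sub_self])

@[simp] lemma mL_mk (x : TensorProduct k A A) :
    mL Bg (Submodule.Quotient.mk x) = mL0 Bg x := rfl

/-- Multiplication descends to `A ⋆ A`. -/
noncomputable def mulS : (TensorProduct k A A ⧸ starRel Bg) →ₗ[k] A :=
  Submodule.liftQ _ (LinearMap.mul' k A) (by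
    rw [starRel, Submodule.span_le]
    rintro x ⟨r, a, b, rfl⟩
    simp only [SetLike.mem_coe, LinearMap.mem_ker, map_sub, LinearMap.mul'_apply]
    rw [← mul_assoc a, ← Bg.tgt_central r a, sub_self])

@[simp] lemma mulS_mk (x : TensorProduct k A A) :
    mulS Bg (Submodule.Quotient.mk x) = LinearMap.mul' k A x := rfl

/-- Left multiplication by `w` on `A ⊗_R A`. -/
noncomputable def LC (w : TensorProduct k A A) :
    (TensorProduct k A A ⧸ corel k R A Bg.src Bg.tgt) →ₗ[k]
      (TensorProduct k A A ⧸ corel k R A Bg.src Bg.tgt) :=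
  Submodule.liftQ _ ((corel k R A Bg.src Bg.tgt).mkQ ∘ₗ LinearMap.mulLeft k w)
    (fun x hx => by
      simp only [LinearMap.mem_ker, LinearMap.comp_apply, LinearMap.mulLeft_apply,
        Submodule.mkQ_apply, Submodule.Quotient.mk_eq_zero]
      exact CR_mul_left Bg hx w)

@[simp] lemma LC_mk (w x : TensorProduct k A A) :
    LC Bg w (Submodule.Quotient.mk x) = Submodule.Quotient.mk (w * x) := rfl

/-- Right multiplication by `w` on `A ⊗_R A`. -/
noncomputable def RC (w : TensorProduct k A A) :
    (TensorProduct k A A ⧸ corel k R A Bg.src Bg.tgt) →ₗ[k]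
      (TensorProduct k A A ⧸ corel k R A Bg.src Bg.tgt) :=
  Submodule.liftQ _ ((corel k R A Bg.src Bg.tgt).mkQ ∘ₗ LinearMap.mulRight k w)
    (fun x hx => by
      simp only [LinearMap.mem_ker, LinearMap.comp_apply, LinearMap.mulRight_apply,
        Submodule.mkQ_apply, Submodule.Quotient.mk_eq_zero]
      exact CR_mul_right Bg hx w)

@[simp] lemma RC_mk (w x : TensorProduct k A A) :
    RC Bg w (Submodule.Quotient.mk x) = Submodule.Quotient.mk (x * w) := rfl

/-- Left multiplication by `w` on `A ⋆ A`. -/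
noncomputable def LS (w : TensorProduct k A A) :
    (TensorProduct k A A ⧸ starRel Bg) →ₗ[k] (TensorProduct k A A ⧸ starRel Bg) :=
  Submodule.liftQ _ ((starRel Bg).mkQ ∘ₗ LinearMap.mulLeft k w)
    (fun x hx => by
      simp only [LinearMap.mem_ker, LinearMap.comp_apply, LinearMap.mulLeft_apply,
        Submodule.mkQ_apply, Submodule.Quotient.mk_eq_zero]
      exact SR_mul_left Bg hx w)

@[simp] lemma LS_mk (w x : TensorProduct k A A) :
    LS Bg w (Submodule.Quotient.mk x) = Submodule.Quotient.mk (w * x) := rfl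

/-- Right multiplication by `w` on `A ⋆ A`. -/
noncomputable def RS (w : TensorProduct k A A) :
    (TensorProduct k A A ⧸ starRel Bg) →ₗ[k] (TensorProduct k A A ⧸ starRel Bg) :=
  Submodule.liftQ _ ((starRel Bg).mkQ ∘ₗ LinearMap.mulRight k w)
    (fun x hx => by
      simp only [LinearMap.mem_ker, LinearMap.comp_apply, LinearMap.mulRight_apply,
        Submodule.mkQ_apply, Submodule.Quotient.mk_eq_zero]
      exact SR_mul_right Bg hx w)

@[simp] lemma RS_mk (w x : TensorProduct k A A) :
    RS Bg w (Submodule.Quotient.mk x) = Submodule.Quotient.mk (x * w) := rfl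

/-- Right multiplication on the triple quotient. -/
noncomputable def R3 (w : TensorProduct k A (TensorProduct k A A)) :
    (TensorProduct k A (TensorProduct k A A) ⧸ corel3 k R A Bg.src Bg.tgt) →ₗ[k]
      (TensorProduct k A (TensorProduct k A A) ⧸ corel3 k R A Bg.src Bg.tgt) :=
  Submodule.liftQ _ ((corel3 k R A Bg.src Bg.tgt).mkQ ∘ₗ LinearMap.mulRight k w)
    (fun x hx => by
      simp only [LinearMap.mem_ker, LinearMap.comp_apply, LinearMap.mulRight_apply,
        Submodule.mkQ_apply, Submodule.Quotient.mk_eq_zero]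
      exact C3_mul_right Bg hx w)

@[simp] lemma R3_mk (w x : TensorProduct k A (TensorProduct k A A)) :
    R3 Bg w (Submodule.Quotient.mk x) = Submodule.Quotient.mk (x * w) := rfl

/-- A representative of the Galois map: `y ⊗ z ↦ Δy * (1 ⊗ z)`. -/
noncomputable def g0 : TensorProduct k A A →ₗ[k] TensorProduct k A A :=
  TensorProduct.lift
    (((LinearMap.mul k (TensorProduct k A A)) ∘ₗ Bg.comul).compl₂
      (TensorProduct.mk k A A 1))

@[simp] lemma g0_tmul (y z : A) :
    g0 Bg (y ⊗ₜ[k] z) = Bg.comul y * ((1:A) ⊗ₜ[k] z) := by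
  simp [g0]

/-- `a ↦ a ⊗ 1`. -/
noncomputable def P0 : A →ₗ[k] TensorProduct k A A := (TensorProduct.mk k A A).flip 1

@[simp] lemma P0_apply (a : A) : P0 (a : A) = a ⊗ₜ[k] (1:A) := rfl

/-- `a ↦ [a ⊗ 1] ∈ A ⊗_R A`. -/
noncomputable def P' : A →ₗ[k] (TensorProduct k A A ⧸ corel k R A Bg.src Bg.tgt) :=
  (corel k R A Bg.src Bg.tgt).mkQ ∘ₗ P0

@[simp] lemma P'_apply (a : A) :
    P' Bg a = Submodule.Quotient.mk (a ⊗ₜ[k] (1:A)) := rfl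

end Stmt10Proof

namespace Stmt10Proof

variable {k R A : Type} [CommRing k] [CommRing R] [Algebra k R]
  [Ring A] [Algebra k A]

variable (Bg : Bialgebroid k R A)
variable (γ : (TensorProduct k A A ⧸ starRel Bg) →ₗ[k]
    (TensorProduct k A A ⧸ corel k R A Bg.src Bg.tgt))

/-- The statement that `γ` is induced by `g0`. -/
abbrev IsGal : Prop := ∀ a b : A,
  γ (Submodule.Quotient.mk (a ⊗ₜ[k] b)) =
    Submodule.Quotient.mk (Bg.comul a * ((1:A) ⊗ₜ[k] b))

/-- The inverse of the Galois map. -/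
noncomputable def es (hbij : Function.Bijective γ) :
    (TensorProduct k A A ⧸ corel k R A Bg.src Bg.tgt) →ₗ[k]
      (TensorProduct k A A ⧸ starRel Bg) :=
  (LinearEquiv.ofBijective γ hbij).symm.toLinearMap

variable (hbij : Function.Bijective γ)

lemma γ_es (v : TensorProduct k A A ⧸ corel k R A Bg.src Bg.tgt) :
    γ (es Bg γ hbij v) = v :=
  (LinearEquiv.ofBijective γ hbij).apply_symm_apply v

lemma es_γ (z : TensorProduct k A A ⧸ starRel Bg) :
    es Bg γ hbij (γ z) = z :=
  (LinearEquiv.ofBijective γ hbij).symm_apply_apply z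

lemma es_comm {X : (TensorProduct k A A ⧸ starRel Bg) →ₗ[k]
      (TensorProduct k A A ⧸ starRel Bg)}
    {Y : (TensorProduct k A A ⧸ corel k R A Bg.src Bg.tgt) →ₗ[k]
      (TensorProduct k A A ⧸ corel k R A Bg.src Bg.tgt)}
    (h : γ ∘ₗ X = Y ∘ₗ γ)
    (v : TensorProduct k A A ⧸ corel k R A Bg.src Bg.tgt) :
    es Bg γ hbij (Y v) = X (es Bg γ hbij v) := by
  have h2 : γ (X (es Bg γ hbij v)) = Y (γ (es Bg γ hbij v)) := by
    have := LinearMap.congr_fun h (es Bg γ hbij v)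
    simpa using this
  apply hbij.1
  rw [γ_es Bg γ hbij, h2, γ_es Bg γ hbij]

lemma γ_mk (hγ : IsGal Bg γ) (x y : A) :
    γ (Submodule.Quotient.mk (x ⊗ₜ[k] y)) =
      Submodule.Quotient.mk (g0 Bg (x ⊗ₜ[k] y)) := by
  rw [g0_tmul]; exact hγ x y

lemma γ_mkQ (hγ : IsGal Bg γ) : γ ∘ₗ (starRel Bg).mkQ =
    (corel k R A Bg.src Bg.tgt).mkQ ∘ₗ g0 Bg :=
  TensorProduct.ext' fun x y => by
    simpa using γ_mk Bg γ hγ x y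

/-- Intertwining: left multiplication by `s r ⊗ 1`. -/
lemma γ_LS (hγ : IsGal Bg γ) (r : R) :
    γ ∘ₗ LS Bg (Bg.src r ⊗ₜ[k] (1:A)) = LC Bg (Bg.src r ⊗ₜ[k] (1:A)) ∘ₗ γ := by
  apply qext2
  intro u v
  simp only [LinearMap.comp_apply, LS_mk, LC_mk]
  rw [Algebra.TensorProduct.tmul_mul_tmul, one_mul, γ_mk Bg γ hγ, γ_mk Bg γ hγ]
  rw [g0_tmul, g0_tmul, LC_mk]
  rw [Submodule.Quotient.eq]
  have hc : Bg.comul (Bg.src r * u) - (Bg.src r ⊗ₜ[k] (1:A)) * Bg.comul u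
      ∈ corel k R A Bg.src Bg.tgt :=
    (Submodule.Quotient.eq _).mp (Bg.comul_src r u)
  have heq : Bg.comul (Bg.src r * u) * ((1:A) ⊗ₜ[k] v) -
      Bg.src r ⊗ₜ[k] (1:A) * (Bg.comul u * ((1:A) ⊗ₜ[k] v)) =
      (Bg.comul (Bg.src r * u) - (Bg.src r ⊗ₜ[k] (1:A)) * Bg.comul u)
        * ((1:A) ⊗ₜ[k] v) := by
    rw [sub_mul, mul_assoc]
  rw [heq]
  exact CR_mul_right Bg hc _

/-- Intertwining: right multiplication by `1 ⊗ c`. -/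
lemma γ_RS (hγ : IsGal Bg γ) (c : A) :
    γ ∘ₗ RS Bg ((1:A) ⊗ₜ[k] c) = RC Bg ((1:A) ⊗ₜ[k] c) ∘ₗ γ := by
  apply qext2
  intro u v
  simp only [LinearMap.comp_apply, RS_mk, RC_mk]
  rw [Algebra.TensorProduct.tmul_mul_tmul, mul_one, γ_mk Bg γ hγ, γ_mk Bg γ hγ]
  rw [g0_tmul, g0_tmul, RC_mk, mul_assoc, Algebra.TensorProduct.tmul_mul_tmul, one_mul]

lemma mS_LS (r : R) :
    mS Bg ∘ₗ LS Bg (Bg.src r ⊗ₜ[k] (1:A)) =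
      LinearMap.mulLeft k (Bg.tgt r) ∘ₗ mS Bg := by
  apply qext2
  intro u v
  simp only [LinearMap.comp_apply, LS_mk, mS_mk, LinearMap.mulLeft_apply]
  rw [Algebra.TensorProduct.tmul_mul_tmul, one_mul, m0_tmul, m0_tmul,
    Bg.counit_left, map_mul, mul_assoc]

lemma mS_RS (c : A) :
    mS Bg ∘ₗ RS Bg ((1:A) ⊗ₜ[k] c) =
      LinearMap.mulRight k c ∘ₗ mS Bg := by
  apply qext2
  intro u v
  simp only [LinearMap.comp_apply, RS_mk, mS_mk, LinearMap.mulRight_apply]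
  rw [Algebra.TensorProduct.tmul_mul_tmul, mul_one, m0_tmul, m0_tmul, mul_assoc]

/-- The antipode. -/
noncomputable def SS : A →ₗ[k] A := mS Bg ∘ₗ es Bg γ hbij ∘ₗ P' Bg

lemma SS_apply (a : A) :
    SS Bg γ hbij a =
      mS Bg (es Bg γ hbij (Submodule.Quotient.mk (a ⊗ₜ[k] (1:A)))) := rfl

lemma prop3 (hγ : IsGal Bg γ) (a : A) (r : R) :
    SS Bg γ hbij (a * Bg.src r) = Bg.tgt r * SS Bg γ hbij a := by
  rw [SS_apply, SS_apply]
  have h1 : (Submodule.Quotient.mk ((a * Bg.src r) ⊗ₜ[k] (1:A)) :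
      TensorProduct k A A ⧸ corel k R A Bg.src Bg.tgt) =
      LC Bg (Bg.src r ⊗ₜ[k] (1:A)) (Submodule.Quotient.mk (a ⊗ₜ[k] (1:A))) := by
    rw [LC_mk, Algebra.TensorProduct.tmul_mul_tmul, one_mul, Bg.src_central r a]
  rw [h1, es_comm Bg γ hbij (γ_LS Bg γ hγ r)]
  have := LinearMap.congr_fun (mS_LS Bg r)
    (es Bg γ hbij (Submodule.Quotient.mk (a ⊗ₜ[k] (1:A))))
  simpa using this

lemma prop4 (hγ : IsGal Bg γ) (a : A) (r : R) :
    SS Bg γ hbij (Bg.tgt r * a) = SS Bg γ hbij a * Bg.src r := by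
  rw [SS_apply, SS_apply]
  have h1 : (Submodule.Quotient.mk ((Bg.tgt r * a) ⊗ₜ[k] (1:A)) :
      TensorProduct k A A ⧸ corel k R A Bg.src Bg.tgt) =
      RC Bg ((1:A) ⊗ₜ[k] Bg.src r) (Submodule.Quotient.mk (a ⊗ₜ[k] (1:A))) := by
    rw [RC_mk, Algebra.TensorProduct.tmul_mul_tmul, mul_one, one_mul,
      Submodule.Quotient.eq]
    have := mem_CR Bg r a 1
    rwa [mul_one] at this
  rw [h1, es_comm Bg γ hbij (γ_RS Bg γ hγ (Bg.src r))]
  have := LinearMap.congr_fun (mS_RS Bg (Bg.src r))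
    (es Bg γ hbij (Submodule.Quotient.mk (a ⊗ₜ[k] (1:A))))
  simpa using this

lemma mk_comul (hγ : IsGal Bg γ) (a : A) :
    (Submodule.Quotient.mk (Bg.comul a) :
      TensorProduct k A A ⧸ corel k R A Bg.src Bg.tgt) =
    γ (Submodule.Quotient.mk (a ⊗ₜ[k] (1:A))) := by
  rw [γ_mk Bg γ hγ, g0_tmul, ← Algebra.TensorProduct.one_def, mul_one]

/-- The sixth property: `S(a₁) a₂ = t(ε a)`. -/
lemma prop6 (hγ : IsGal Bg γ) (a : A) :
    LinearMap.mul' k A ((LinearMap.rTensor A (SS Bg γ hbij)) (Bg.comul a)) =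
      Bg.tgt (Bg.counit a) := by
  have key : LinearMap.mul' k A ∘ₗ LinearMap.rTensor A (SS Bg γ hbij) =
      mS Bg ∘ₗ es Bg γ hbij ∘ₗ (corel k R A Bg.src Bg.tgt).mkQ := by
    apply TensorProduct.ext'
    intro x y
    simp only [LinearMap.comp_apply, LinearMap.rTensor_tmul, LinearMap.mul'_apply,
      Submodule.mkQ_apply]
    have h1 : (Submodule.Quotient.mk (x ⊗ₜ[k] y) :
        TensorProduct k A A ⧸ corel k R A Bg.src Bg.tgt) =
        RC Bg ((1:A) ⊗ₜ[k] y) (Submodule.Quotient.mk (x ⊗ₜ[k] (1:A))) := by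
      rw [RC_mk, Algebra.TensorProduct.tmul_mul_tmul, mul_one, one_mul]
    rw [h1, es_comm Bg γ hbij (γ_RS Bg γ hγ y)]
    have := LinearMap.congr_fun (mS_RS Bg y)
      (es Bg γ hbij (Submodule.Quotient.mk (x ⊗ₜ[k] (1:A))))
    simp only [LinearMap.comp_apply, LinearMap.mulRight_apply] at this
    rw [this, SS_apply]
  have hk := LinearMap.congr_fun key (Bg.comul a)
  simp only [LinearMap.comp_apply, Submodule.mkQ_apply] at hk
  rw [hk, mk_comul Bg γ hγ a, es_γ Bg γ hbij, mS_mk, m0_tmul, mul_one]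
end Stmt10Proof

namespace Stmt10Proof

variable {k R A : Type} [CommRing k] [CommRing R] [Algebra k R]
  [Ring A] [Algebra k A]

variable (Bg : Bialgebroid k R A)

/-! Sandwich membership lemmas. -/

lemma sandwich1 (r : R) (b : A) (w : TensorProduct k A A) :
    (Bg.tgt r * b) ⊗ₜ[k] w - b ⊗ₜ[k] ((Bg.src r ⊗ₜ[k] (1:A)) * w)
      ∈ corel3 k R A Bg.src Bg.tgt := by
  induction w using TensorProduct.induction_on with
  | zero => simp
  | tmul p q =>
    rw [Algebra.TensorProduct.tmul_mul_tmul, one_mul]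
    exact mem_C3_1 Bg r b p q
  | add w1 w2 h1 h2 =>
    rw [mul_add, tmul_add, tmul_add, ← sub_add_sub_comm]
    exact add_mem h1 h2

lemma sandwichH (r : R) (b : A) (w : TensorProduct k A A) :
    (TensorProduct.assoc k A A A) ((w * ((1:A) ⊗ₜ[k] Bg.tgt r)) ⊗ₜ[k] b) -
      (TensorProduct.assoc k A A A) (w ⊗ₜ[k] (Bg.tgt r * b)) ∈ WL Bg := by
  induction w using TensorProduct.induction_on with
  | zero => simp
  | tmul p q =>
    rw [Algebra.TensorProduct.tmul_mul_tmul, mul_one, assoc_tmul, assoc_tmul,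
      ← Bg.tgt_central r q]
    exact mem_WL2 Bg r p q b
  | add w1 w2 h1 h2 =>
    rw [add_mul, add_tmul, add_tmul, map_add, map_add, ← sub_add_sub_comm]
    exact add_mem h1 h2

lemma sandwichX (r : R) (c : A) (w : TensorProduct k A A) :
    (TensorProduct.assoc k A A A) ((w * ((1:A) ⊗ₜ[k] Bg.tgt r)) ⊗ₜ[k] c) -
      (TensorProduct.assoc k A A A) (w ⊗ₜ[k] (Bg.src r * c))
      ∈ corel3 k R A Bg.src Bg.tgt := by
  induction w using TensorProduct.induction_on with
  | zero => simp
  | tmul p q =>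
    rw [Algebra.TensorProduct.tmul_mul_tmul, mul_one, assoc_tmul, assoc_tmul,
      ← Bg.tgt_central r q]
    exact mem_C3_2 Bg r p q c
  | add w1 w2 h1 h2 =>
    rw [add_mul, add_tmul, add_tmul, map_add, map_add, ← sub_add_sub_comm]
    exact add_mem h1 h2

/-! The maps into and out of the three-fold quotients. -/

/-- `z ↦ [x ⊗ z]` on `A ⋆ A`, with values in the mixed quotient. -/
noncomputable def Jmap (x : A) :
    (TensorProduct k A A ⧸ starRel Bg) →ₗ[k]
      (TensorProduct k A (TensorProduct k A A) ⧸ WL Bg) :=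
  Submodule.liftQ _ ((WL Bg).mkQ ∘ₗ TensorProduct.mk k A (TensorProduct k A A) x)
    (fun u hu => by
      simp only [LinearMap.mem_ker, LinearMap.comp_apply, TensorProduct.mk_apply,
        Submodule.mkQ_apply, Submodule.Quotient.mk_eq_zero]
      exact tmul_SR_WL Bg hu x)

@[simp] lemma Jmap_mk (x : A) (w : TensorProduct k A A) :
    Jmap Bg x (Submodule.Quotient.mk w) = Submodule.Quotient.mk (x ⊗ₜ[k] w) := rfl

/-- `z ↦ [x ⊗ z]` on `A ⊗_R A`, with values in the quotient by `corel3`. -/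
noncomputable def J' (x : A) :
    (TensorProduct k A A ⧸ corel k R A Bg.src Bg.tgt) →ₗ[k]
      (TensorProduct k A (TensorProduct k A A) ⧸ corel3 k R A Bg.src Bg.tgt) :=
  Submodule.liftQ _ ((corel3 k R A Bg.src Bg.tgt).mkQ ∘ₗ
      TensorProduct.mk k A (TensorProduct k A A) x)
    (fun u hu => by
      simp only [LinearMap.mem_ker, LinearMap.comp_apply, TensorProduct.mk_apply,
        Submodule.mkQ_apply, Submodule.Quotient.mk_eq_zero]
      exact tmul_CR_C3 Bg hu x)

@[simp] lemma J'_mk (x : A) (w : TensorProduct k A A) :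
    J' Bg x (Submodule.Quotient.mk w) = Submodule.Quotient.mk (x ⊗ₜ[k] w) := rfl

/-- `Jmap` as a bundled bilinear map. -/
noncomputable def J : A →ₗ[k]
    (TensorProduct k A A ⧸ starRel Bg) →ₗ[k]
      (TensorProduct k A (TensorProduct k A A) ⧸ WL Bg) where
  toFun := Jmap Bg
  map_add' x y := by
    apply qext2
    intro u v
    simp [add_tmul]
  map_smul' c x := by
    apply qext2
    intro u v
    show Jmap Bg (c • x) (Submodule.Quotient.mk (u ⊗ₜ[k] v)) =
      c • Jmap Bg x (Submodule.Quotient.mk (u ⊗ₜ[k] v))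
    rw [Jmap_mk, Jmap_mk, ← Submodule.Quotient.mk_smul, smul_tmul']

@[simp] lemma J_apply (x : A) : J Bg x = Jmap Bg x := rfl

lemma J_tr (r : R) (b : A) :
    Jmap Bg (Bg.tgt r * b) = Jmap Bg b ∘ₗ LS Bg (Bg.src r ⊗ₜ[k] (1:A)) := by
  apply qext2
  intro u v
  simp only [LinearMap.comp_apply, Jmap_mk, LS_mk]
  rw [Algebra.TensorProduct.tmul_mul_tmul, one_mul, Submodule.Quotient.eq]
  exact mem_WL1 Bg r b u v

/-- The map `Γ : QL → Q3`, `x ⊗ y ⊗ z ↦ x ⊗ (Δy (1 ⊗ z))`. -/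
noncomputable def GammaQ :
    (TensorProduct k A (TensorProduct k A A) ⧸ WL Bg) →ₗ[k]
      (TensorProduct k A (TensorProduct k A A) ⧸ corel3 k R A Bg.src Bg.tgt) :=
  Submodule.liftQ _
    ((corel3 k R A Bg.src Bg.tgt).mkQ ∘ₗ LinearMap.lTensor A (g0 Bg)) (by
    rw [WL, Submodule.span_le]
    rintro x (⟨r, b, c, d, rfl⟩ | ⟨r, b, c, d, rfl⟩) <;>
      simp only [SetLike.mem_coe, LinearMap.mem_ker, LinearMap.comp_apply,
        map_sub, LinearMap.lTensor_tmul, Submodule.mkQ_apply,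
        ← Submodule.Quotient.mk_sub, Submodule.Quotient.mk_eq_zero]
    · have hu : Bg.comul (Bg.src r * c) - (Bg.src r ⊗ₜ[k] (1:A)) * Bg.comul c
          ∈ corel k R A Bg.src Bg.tgt :=
        (Submodule.Quotient.eq _).mp (Bg.comul_src r c)
      have e1 : g0 Bg ((Bg.src r * c) ⊗ₜ[k] d) =
          (Bg.src r ⊗ₜ[k] (1:A)) * g0 Bg (c ⊗ₜ[k] d) +
          (Bg.comul (Bg.src r * c) - (Bg.src r ⊗ₜ[k] (1:A)) * Bg.comul c) *
            ((1:A) ⊗ₜ[k] d) := by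
        rw [g0_tmul, g0_tmul, sub_mul, ← mul_assoc]
        abel
      rw [e1, tmul_add, sub_add_eq_sub_sub]
      exact sub_mem (sandwich1 Bg r b (g0 Bg (c ⊗ₜ[k] d)))
        (tmul_CR_C3 Bg (CR_mul_right Bg hu _) b)
    · have hu : Bg.comul (Bg.tgt r * c) - Bg.comul c * ((1:A) ⊗ₜ[k] Bg.tgt r)
          ∈ corel k R A Bg.src Bg.tgt :=
        (Submodule.Quotient.eq _).mp (Bg.comul_tgt r c)
      have e2 : g0 Bg ((Bg.tgt r * c) ⊗ₜ[k] d) =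
          g0 Bg (c ⊗ₜ[k] (Bg.tgt r * d)) +
          (Bg.comul (Bg.tgt r * c) - Bg.comul c * ((1:A) ⊗ₜ[k] Bg.tgt r)) *
            ((1:A) ⊗ₜ[k] d) := by
        rw [g0_tmul, g0_tmul, sub_mul, mul_assoc,
          Algebra.TensorProduct.tmul_mul_tmul, one_mul]
        abel
      rw [e2, tmul_add, add_sub_cancel_left]
      exact tmul_CR_C3 Bg (CR_mul_right Bg hu _) b)

@[simp] lemma GammaQ_mk (x : TensorProduct k A (TensorProduct k A A)) :
    GammaQ Bg (Submodule.Quotient.mk x) =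
      Submodule.Quotient.mk (LinearMap.lTensor A (g0 Bg) x) := rfl

/-- The map `H̄ : A ⋆ A → QL`, `u ⊗ v ↦ Δu ⊗ v`. -/
noncomputable def HbarQ :
    (TensorProduct k A A ⧸ starRel Bg) →ₗ[k]
      (TensorProduct k A (TensorProduct k A A) ⧸ WL Bg) :=
  Submodule.liftQ _
    ((WL Bg).mkQ ∘ₗ (TensorProduct.assoc k A A A).toLinearMap ∘ₗ
      LinearMap.rTensor A Bg.comul) (by
    rw [starRel, Submodule.span_le]
    rintro x ⟨r, a, b, rfl⟩
    simp only [SetLike.mem_coe, LinearMap.mem_ker, LinearMap.comp_apply,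
      map_sub, LinearMap.rTensor_tmul, LinearEquiv.coe_coe, Submodule.mkQ_apply,
      ← Submodule.Quotient.mk_sub, Submodule.Quotient.mk_eq_zero]
    have hu : Bg.comul (Bg.tgt r * a) - Bg.comul a * ((1:A) ⊗ₜ[k] Bg.tgt r)
        ∈ corel k R A Bg.src Bg.tgt :=
      (Submodule.Quotient.eq _).mp (Bg.comul_tgt r a)
    have e1 : Bg.comul (Bg.tgt r * a) ⊗ₜ[k] b =
        (Bg.comul a * ((1:A) ⊗ₜ[k] Bg.tgt r)) ⊗ₜ[k] b +
        (Bg.comul (Bg.tgt r * a) - Bg.comul a * ((1:A) ⊗ₜ[k] Bg.tgt r)) ⊗ₜ[k] b := by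
      rw [← add_tmul]
      congr 1
      abel
    rw [e1, map_add, add_sub_right_comm]
    exact add_mem (sandwichH Bg r b (Bg.comul a)) (assoc_CR_WL Bg hu b))

@[simp] lemma HbarQ_mk (x : TensorProduct k A A) :
    HbarQ Bg (Submodule.Quotient.mk x) =
      Submodule.Quotient.mk ((TensorProduct.assoc k A A A)
        ((LinearMap.rTensor A Bg.comul) x)) := rfl

/-- The map `Ξ₂ : A ⊗_R A → Q3`, `u ⊗ v ↦ Δu ⊗ v`. -/
noncomputable def Xi2 :
    (TensorProduct k A A ⧸ corel k R A Bg.src Bg.tgt) →ₗ[k]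
      (TensorProduct k A (TensorProduct k A A) ⧸ corel3 k R A Bg.src Bg.tgt) :=
  Submodule.liftQ _
    ((corel3 k R A Bg.src Bg.tgt).mkQ ∘ₗ (TensorProduct.assoc k A A A).toLinearMap ∘ₗ
      LinearMap.rTensor A Bg.comul) (by
    rw [corel, Submodule.span_le]
    rintro x ⟨r, b, c, rfl⟩
    simp only [SetLike.mem_coe, LinearMap.mem_ker, LinearMap.comp_apply,
      map_sub, LinearMap.rTensor_tmul, LinearEquiv.coe_coe, Submodule.mkQ_apply,
      ← Submodule.Quotient.mk_sub, Submodule.Quotient.mk_eq_zero]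
    have hu : Bg.comul (Bg.tgt r * b) - Bg.comul b * ((1:A) ⊗ₜ[k] Bg.tgt r)
        ∈ corel k R A Bg.src Bg.tgt :=
      (Submodule.Quotient.eq _).mp (Bg.comul_tgt r b)
    have e1 : Bg.comul (Bg.tgt r * b) ⊗ₜ[k] c =
        (Bg.comul b * ((1:A) ⊗ₜ[k] Bg.tgt r)) ⊗ₜ[k] c +
        (Bg.comul (Bg.tgt r * b) - Bg.comul b * ((1:A) ⊗ₜ[k] Bg.tgt r)) ⊗ₜ[k] c := by
      rw [← add_tmul]
      congr 1
      abel
    rw [e1, map_add, add_sub_right_comm]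
    exact add_mem (sandwichX Bg r c (Bg.comul b)) (assoc_CR_C3 Bg hu c))

@[simp] lemma Xi2_mk (x : TensorProduct k A A) :
    Xi2 Bg (Submodule.Quotient.mk x) =
      Submodule.Quotient.mk ((TensorProduct.assoc k A A A)
        ((LinearMap.rTensor A Bg.comul) x)) := rfl

/-- The final evaluation map `QL → A`, `x ⊗ y ⊗ z ↦ x * t(ε y) * z`. -/
noncomputable def GQ :
    (TensorProduct k A (TensorProduct k A A) ⧸ WL Bg) →ₗ[k] A :=
  Submodule.liftQ _ (LinearMap.mul' k A ∘ₗ LinearMap.lTensor A (m0 Bg)) (by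
    rw [WL, Submodule.span_le]
    rintro x (⟨r, b, c, d, rfl⟩ | ⟨r, b, c, d, rfl⟩) <;>
      simp only [SetLike.mem_coe, LinearMap.mem_ker, LinearMap.comp_apply,
        map_sub, LinearMap.lTensor_tmul, m0_tmul, LinearMap.mul'_apply]
    · rw [Bg.counit_left, map_mul, Bg.tgt_central r b, mul_assoc, mul_assoc,
        sub_self]
    · rw [Bg.counit_right, map_mul, Bg.tgt_central r (Bg.tgt (Bg.counit c)),
        mul_assoc, sub_self])

@[simp] lemma GQ_mk (x : TensorProduct k A (TensorProduct k A A)) :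
    GQ Bg (Submodule.Quotient.mk x) =
      LinearMap.mul' k A (LinearMap.lTensor A (m0 Bg) x) := rfl

end Stmt10Proof

namespace Stmt10Proof

set_option synthInstance.maxHeartbeats 1000000
set_option maxHeartbeats 1000000

variable {k R A : Type} [CommRing k] [CommRing R] [Algebra k R]
  [Ring A] [Algebra k A]

variable (Bg : Bialgebroid k R A)
variable (γ : (TensorProduct k A A ⧸ starRel Bg) →ₗ[k]
    (TensorProduct k A A ⧸ corel k R A Bg.src Bg.tgt))
variable (hbij : Function.Bijective γ)

/-- `ψ : A ⊗ (A ⊗ A) → QL`, `x ⊗ w ↦ x ⊗ γ⁻¹[w]`. -/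
noncomputable def psi : TensorProduct k A (TensorProduct k A A) →ₗ[k]
    (TensorProduct k A (TensorProduct k A A) ⧸ WL Bg) :=
  TensorProduct.lift (J Bg) ∘ₗ
    LinearMap.lTensor A (es Bg γ hbij ∘ₗ (corel k R A Bg.src Bg.tgt).mkQ)

lemma psi_tmul (x : A) (w : TensorProduct k A A) :
    psi Bg γ hbij (x ⊗ₜ[k] w) =
      Jmap Bg x (es Bg γ hbij (Submodule.Quotient.mk w)) := by
  simp [psi]

/-- `Γ' : Q3 → QL`, a retraction of `Γ`. -/
noncomputable def GammaQ' (hγ : IsGal Bg γ) :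
    (TensorProduct k A (TensorProduct k A A) ⧸ corel3 k R A Bg.src Bg.tgt) →ₗ[k]
      (TensorProduct k A (TensorProduct k A A) ⧸ WL Bg) :=
  Submodule.liftQ _ (psi Bg γ hbij) (by
    rw [corel3, Submodule.span_le]
    rintro x (⟨r, b, c, d, rfl⟩ | ⟨r, b, c, d, rfl⟩) <;>
      simp only [SetLike.mem_coe, LinearMap.mem_ker, map_sub, psi_tmul]
    · have h1 : (Submodule.Quotient.mk ((Bg.src r * c) ⊗ₜ[k] d) :
          TensorProduct k A A ⧸ corel k R A Bg.src Bg.tgt) =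
          LC Bg (Bg.src r ⊗ₜ[k] (1:A)) (Submodule.Quotient.mk (c ⊗ₜ[k] d)) := by
        rw [LC_mk, Algebra.TensorProduct.tmul_mul_tmul, one_mul]
      rw [h1, es_comm Bg γ hbij (γ_LS Bg γ hγ r)]
      have h2 := LinearMap.congr_fun (J_tr Bg r b)
        (es Bg γ hbij (Submodule.Quotient.mk (c ⊗ₜ[k] d)))
      simp only [LinearMap.comp_apply] at h2
      rw [h2, sub_self]
    · have h1 : (Submodule.Quotient.mk ((Bg.tgt r * c) ⊗ₜ[k] d) :
          TensorProduct k A A ⧸ corel k R A Bg.src Bg.tgt) =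
          Submodule.Quotient.mk (c ⊗ₜ[k] (Bg.src r * d)) :=
        (Submodule.Quotient.eq _).mpr (mem_CR Bg r c d)
      rw [h1, sub_self])

lemma GammaQ'_mk (hγ : IsGal Bg γ) (x : TensorProduct k A (TensorProduct k A A)) :
    GammaQ' Bg γ hbij hγ (Submodule.Quotient.mk x) = psi Bg γ hbij x := rfl

/-- `Γ' ∘ Γ = id`. -/
lemma GammaQ'_GammaQ (hγ : IsGal Bg γ) :
    GammaQ' Bg γ hbij hγ ∘ₗ GammaQ Bg = LinearMap.id := by
  apply qext3
  intro x w
  simp only [LinearMap.comp_apply, GammaQ_mk, LinearMap.lTensor_tmul,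
    GammaQ'_mk, psi_tmul, LinearMap.id_apply]
  have hg := LinearMap.congr_fun (γ_mkQ Bg γ hγ) w
  simp only [LinearMap.comp_apply, Submodule.mkQ_apply] at hg
  rw [← hg, es_γ Bg γ hbij, Jmap_mk]

/-- `K : A ⊗ A → QL`, `x ⊗ y ↦ x ⊗ y⁺ ⊗ y⁻`. -/
noncomputable def Kmap : TensorProduct k A A →ₗ[k]
    (TensorProduct k A (TensorProduct k A A) ⧸ WL Bg) :=
  TensorProduct.lift ((J Bg).compl₂ (es Bg γ hbij ∘ₗ P' Bg))

lemma Kmap_tmul (x y : A) :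
    Kmap Bg γ hbij (x ⊗ₜ[k] y) =
      Jmap Bg x (es Bg γ hbij (Submodule.Quotient.mk (y ⊗ₜ[k] (1:A)))) := by
  simp [Kmap]

lemma GammaQ_Jmap (hγ : IsGal Bg γ) (x : A) :
    GammaQ Bg ∘ₗ Jmap Bg x = J' Bg x ∘ₗ γ := by
  apply qext2
  intro u v
  simp only [LinearMap.comp_apply, Jmap_mk, GammaQ_mk, LinearMap.lTensor_tmul,
    γ_mk Bg γ hγ, J'_mk]

/-- `Γ ∘ K = [· ⊗ ·⁺ ⊗ 1]` as maps. -/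
lemma E2 (hγ : IsGal Bg γ) :
    GammaQ Bg ∘ₗ Kmap Bg γ hbij =
      (corel3 k R A Bg.src Bg.tgt).mkQ ∘ₗ LinearMap.lTensor A P0 := by
  apply TensorProduct.ext'
  intro x y
  simp only [LinearMap.comp_apply, Kmap_tmul, LinearMap.lTensor_tmul,
    Submodule.mkQ_apply, P0_apply]
  have h1 := LinearMap.congr_fun (GammaQ_Jmap Bg γ hγ x)
    (es Bg γ hbij (Submodule.Quotient.mk (y ⊗ₜ[k] (1:A))))
  simp only [LinearMap.comp_apply] at h1
  rw [h1, γ_es Bg γ hbij, J'_mk]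

lemma L1 (v : A) (w : TensorProduct k A A) :
    LinearMap.lTensor A (g0 Bg) ((TensorProduct.assoc k A A A) (w ⊗ₜ[k] v)) =
      (LinearMap.lTensor A Bg.comul w) * ((1:A) ⊗ₜ[k] ((1:A) ⊗ₜ[k] v)) := by
  induction w using TensorProduct.induction_on with
  | zero => simp
  | tmul p q =>
    rw [assoc_tmul, LinearMap.lTensor_tmul, LinearMap.lTensor_tmul, g0_tmul,
      Algebra.TensorProduct.tmul_mul_tmul, mul_one]
  | add w1 w2 h1 h2 =>
    rw [add_tmul, map_add, map_add, map_add, add_mul, h1, h2]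

lemma L2 (v : A) (X : TensorProduct k (TensorProduct k A A) A) :
    (TensorProduct.assoc k A A A) X * ((1:A) ⊗ₜ[k] ((1:A) ⊗ₜ[k] v)) =
      (TensorProduct.assoc k A A A) (X * (((1:A) ⊗ₜ[k] (1:A)) ⊗ₜ[k] v)) := by
  induction X using TensorProduct.induction_on with
  | zero => simp
  | tmul w c =>
    induction w using TensorProduct.induction_on with
    | zero => simp
    | tmul p q => simp [Algebra.TensorProduct.tmul_mul_tmul]
    | add w1 w2 h1 h2 => simp [add_tmul, map_add, add_mul, h1, h2]
  | add X1 X2 h1 h2 => simp [map_add, add_mul, h1, h2]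

lemma L3 (v : A) (w : TensorProduct k A A) :
    LinearMap.rTensor A Bg.comul (w * ((1:A) ⊗ₜ[k] v)) =
      (LinearMap.rTensor A Bg.comul w) * (((1:A) ⊗ₜ[k] (1:A)) ⊗ₜ[k] v) := by
  induction w using TensorProduct.induction_on with
  | zero => simp
  | tmul p q =>
    rw [Algebra.TensorProduct.tmul_mul_tmul, mul_one, LinearMap.rTensor_tmul,
      LinearMap.rTensor_tmul, Algebra.TensorProduct.tmul_mul_tmul,
      ← Algebra.TensorProduct.one_def, mul_one]
  | add w1 w2 h1 h2 =>
    rw [add_mul, map_add, map_add, add_mul, h1, h2]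

lemma L4 (w : TensorProduct k A A) :
    LinearMap.lTensor A (P0 : A →ₗ[k] TensorProduct k A A) w =
      (TensorProduct.assoc k A A A) (w ⊗ₜ[k] (1:A)) := by
  induction w using TensorProduct.induction_on with
  | zero => simp
  | tmul p q => rw [LinearMap.lTensor_tmul, assoc_tmul, P0_apply]
  | add w1 w2 h1 h2 => rw [map_add, add_tmul, map_add, h1, h2]

/-- `Γ ∘ H̄ = Ξ₂ ∘ γ`. -/
lemma E3 (hγ : IsGal Bg γ) :
    GammaQ Bg ∘ₗ HbarQ Bg = Xi2 Bg ∘ₗ γ := by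
  apply qext2
  intro u v
  simp only [LinearMap.comp_apply, HbarQ_mk, LinearMap.rTensor_tmul, GammaQ_mk]
  rw [γ_mk Bg γ hγ, Xi2_mk]
  calc Submodule.Quotient.mk (LinearMap.lTensor A (g0 Bg)
        ((TensorProduct.assoc k A A A) (Bg.comul u ⊗ₜ[k] v)))
      = Submodule.Quotient.mk ((LinearMap.lTensor A Bg.comul (Bg.comul u)) *
          ((1:A) ⊗ₜ[k] ((1:A) ⊗ₜ[k] v))) := by rw [L1]
    _ = R3 Bg ((1:A) ⊗ₜ[k] ((1:A) ⊗ₜ[k] v))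
          (Submodule.Quotient.mk (LinearMap.lTensor A Bg.comul (Bg.comul u))) := by
        rw [R3_mk]
    _ = R3 Bg ((1:A) ⊗ₜ[k] ((1:A) ⊗ₜ[k] v))
          (Submodule.Quotient.mk ((TensorProduct.assoc k A A A)
            ((LinearMap.rTensor A Bg.comul) (Bg.comul u)))) := by
        rw [Bg.coassoc u]
    _ = Submodule.Quotient.mk ((TensorProduct.assoc k A A A)
          ((LinearMap.rTensor A Bg.comul) (Bg.comul u)) *
          ((1:A) ⊗ₜ[k] ((1:A) ⊗ₜ[k] v))) := by rw [R3_mk]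
    _ = Submodule.Quotient.mk ((TensorProduct.assoc k A A A)
          ((LinearMap.rTensor A Bg.comul) (Bg.comul u * ((1:A) ⊗ₜ[k] v)))) := by
        rw [L2, L3]
    _ = Submodule.Quotient.mk ((TensorProduct.assoc k A A A)
          ((LinearMap.rTensor A Bg.comul) (g0 Bg (u ⊗ₜ[k] v)))) := by
        rw [g0_tmul]

/-- `G ∘ J x = x * m(·)`. -/
lemma GJ (x : A) :
    GQ Bg ∘ₗ Jmap Bg x = LinearMap.mulLeft k x ∘ₗ mS Bg := by
  apply qext2
  intro u v
  simp only [LinearMap.comp_apply, Jmap_mk, GQ_mk, LinearMap.lTensor_tmul,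
    LinearMap.mul'_apply, mS_mk, m0_tmul, LinearMap.mulLeft_apply]

/-- `μ ∘ (id ⊗ S) = G ∘ K`. -/
lemma E5 : LinearMap.mul' k A ∘ₗ LinearMap.lTensor A (SS Bg γ hbij) =
    GQ Bg ∘ₗ Kmap Bg γ hbij := by
  apply TensorProduct.ext'
  intro x y
  simp only [LinearMap.comp_apply, LinearMap.lTensor_tmul, LinearMap.mul'_apply,
    Kmap_tmul]
  have h1 := LinearMap.congr_fun (GJ Bg x)
    (es Bg γ hbij (Submodule.Quotient.mk (y ⊗ₜ[k] (1:A))))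
  simp only [LinearMap.comp_apply, LinearMap.mulLeft_apply] at h1
  rw [h1, SS_apply]

/-- The `comul_counit_right` evaluation map. -/
noncomputable def ccR : TensorProduct k A A →ₗ[k] A :=
  TensorProduct.lift (((LinearMap.mul k A) ∘ₗ
    (Bg.tgt.toLinearMap ∘ₗ Bg.counit.toLinearMap)).flip)

@[simp] lemma ccR_tmul (p q : A) :
    ccR Bg (p ⊗ₜ[k] q) = Bg.tgt (Bg.counit q) * p := by simp [ccR]

lemma L5 (v : A) (w : TensorProduct k A A) :
    LinearMap.mul' k A (LinearMap.lTensor A (m0 Bg)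
      ((TensorProduct.assoc k A A A) (w ⊗ₜ[k] v))) = ccR Bg w * v := by
  induction w using TensorProduct.induction_on with
  | zero => simp
  | tmul p q =>
    rw [assoc_tmul, LinearMap.lTensor_tmul, LinearMap.mul'_apply, m0_tmul,
      ccR_tmul, ← mul_assoc, ← Bg.tgt_central]
  | add w1 w2 h1 h2 =>
    rw [add_tmul, map_add, map_add, map_add, map_add, add_mul, h1, h2]

/-- `G ∘ H̄ = multiplication`. -/
lemma E6 : GQ Bg ∘ₗ HbarQ Bg = mulS Bg := by
  apply qext2
  intro u v
  simp only [LinearMap.comp_apply, HbarQ_mk, LinearMap.rTensor_tmul, GQ_mk,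
    mulS_mk, LinearMap.mul'_apply]
  rw [L5]
  have : ccR Bg (Bg.comul u) = u := Bg.comul_counit_right u
  rw [this]

lemma L6 (v : A) (w : TensorProduct k A A) :
    mL0 Bg (w * ((1:A) ⊗ₜ[k] v)) = mL0 Bg w * v := by
  induction w using TensorProduct.induction_on with
  | zero => simp
  | tmul p q =>
    rw [Algebra.TensorProduct.tmul_mul_tmul, mul_one, mL0_tmul, mL0_tmul,
      mul_assoc]
  | add w1 w2 h1 h2 => rw [add_mul, map_add, map_add, add_mul, h1, h2]

/-- `μ̄ = mL ∘ γ`. -/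
lemma E7 (hγ : IsGal Bg γ) : mulS Bg = mL Bg ∘ₗ γ := by
  apply qext2
  intro u v
  simp only [LinearMap.comp_apply, mulS_mk, LinearMap.mul'_apply]
  rw [γ_mk Bg γ hγ, mL_mk, g0_tmul, L6]
  have : mL0 Bg (Bg.comul u) = u := Bg.comul_counit_left u
  rw [this]

/-- The fifth property: `a₁ S(a₂) = s(ε a)`. -/
lemma prop5 (hγ : IsGal Bg γ) (a : A) :
    LinearMap.mul' k A ((LinearMap.lTensor A (SS Bg γ hbij)) (Bg.comul a)) =
      Bg.src (Bg.counit a) := by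
  have e5 := LinearMap.congr_fun (E5 Bg γ hbij) (Bg.comul a)
  simp only [LinearMap.comp_apply] at e5
  have himg : GammaQ Bg (Kmap Bg γ hbij (Bg.comul a)) =
      GammaQ Bg (HbarQ Bg (es Bg γ hbij (P' Bg a))) := by
    have h2 := LinearMap.congr_fun (E2 Bg γ hbij hγ) (Bg.comul a)
    simp only [LinearMap.comp_apply, Submodule.mkQ_apply] at h2
    have h3 := LinearMap.congr_fun (E3 Bg γ hγ) (es Bg γ hbij (P' Bg a))
    simp only [LinearMap.comp_apply] at h3
    rw [h2, h3, γ_es Bg γ hbij, P'_apply, Xi2_mk, LinearMap.rTensor_tmul]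
    rw [L4]
  have hKH : Kmap Bg γ hbij (Bg.comul a) = HbarQ Bg (es Bg γ hbij (P' Bg a)) := by
    have hid := GammaQ'_GammaQ Bg γ hbij hγ
    have h4 := LinearMap.congr_fun hid (Kmap Bg γ hbij (Bg.comul a))
    have h5 := LinearMap.congr_fun hid (HbarQ Bg (es Bg γ hbij (P' Bg a)))
    simp only [LinearMap.comp_apply, LinearMap.id_apply] at h4 h5
    rw [← h4, ← h5, himg]
  rw [e5, hKH]
  have h6 := LinearMap.congr_fun (E6 Bg) (es Bg γ hbij (P' Bg a))
  simp only [LinearMap.comp_apply] at h6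
  rw [h6]
  have h7 := LinearMap.congr_fun (E7 Bg γ hγ) (es Bg γ hbij (P' Bg a))
  simp only [LinearMap.comp_apply] at h7
  rw [h7, γ_es Bg γ hbij, P'_apply, mL_mk, mL0_tmul, mul_one]

end Stmt10Proof

/-- If the canonical (Galois) map `A ⋆ A → A ⊗_R A`, `a ⋆ b ↦ a₁ ⊗ a₂ b`, is
bijective, then writing its inverse on `a ⊗ 1` as `a⁺ ⋆ a⁻`, the map
`S(a) := t(ε(a⁺)) a⁻` is an antipode for `A`; hence `A` is a Hopf algebroid. -/
theorem stmt10 (Bg : Bialgebroid k R A)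
    (γ : (TensorProduct k A A ⧸ starRel Bg) →ₗ[k]
         (TensorProduct k A A ⧸ corel k R A Bg.src Bg.tgt))
    (hγ : ∀ a b : A,
      γ (Submodule.Quotient.mk (a ⊗ₜ[k] b)) =
        Submodule.Quotient.mk (Bg.comul a * ((1:A) ⊗ₜ[k] b)))
    (hbij : Function.Bijective γ)
    (γinv : (TensorProduct k A A ⧸ corel k R A Bg.src Bg.tgt) →
            (TensorProduct k A A ⧸ starRel Bg))
    (hinv : ∀ y, γ (γinv y) = y) :
    ∃ (m : (TensorProduct k A A ⧸ starRel Bg) →ₗ[k] A) (S : A →ₗ[k] A),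
      (∀ a b : A,
        m (Submodule.Quotient.mk (a ⊗ₜ[k] b)) = Bg.tgt (Bg.counit a) * b) ∧
      (∀ a : A, S a = m (γinv (Submodule.Quotient.mk (a ⊗ₜ[k] (1:A))))) ∧
      (∀ (a : A) (r : R), S (a * Bg.src r) = Bg.tgt r * S a) ∧
      (∀ (a : A) (r : R), S (Bg.tgt r * a) = S a * Bg.src r) ∧
      (∀ a : A,
        LinearMap.mul' k A ((LinearMap.lTensor A S) (Bg.comul a)) =
          Bg.src (Bg.counit a)) ∧
      (∀ a : A,
        LinearMap.mul' k A ((LinearMap.rTensor A S) (Bg.comul a)) =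
          Bg.tgt (Bg.counit a)) := by
  refine ⟨Stmt10Proof.mS Bg, Stmt10Proof.SS Bg γ hbij, ?_, ?_, ?_, ?_, ?_, ?_⟩
  · intro a b
    rw [Stmt10Proof.mS_mk, Stmt10Proof.m0_tmul]
  · intro a
    have h : γinv (Submodule.Quotient.mk (a ⊗ₜ[k] (1:A))) =
        Stmt10Proof.es Bg γ hbij (Submodule.Quotient.mk (a ⊗ₜ[k] (1:A))) :=
      hbij.1 (by rw [hinv, Stmt10Proof.γ_es])
    rw [h]
    rfl
  · intro a r
    exact Stmt10Proof.prop3 Bg γ hbij hγ a r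
  · intro a r
    exact Stmt10Proof.prop4 Bg γ hbij hγ a r
  · intro a
    exact Stmt10Proof.prop5 Bg γ hbij hγ a
  · intro a
    exact Stmt10Proof.prop6 Bg γ hbij hγ a

end Stmt10
end

section
/- Let L ⊣ R be an adjunction between categories 𝒜 and ℬ with unit ν and counit ε, let T be a comonad on 𝒜 with counit ε^T and comultiplication δ^T, and let λ : L T → S L be a comonad morphism to a comonad S on ℬ. Then the endofunctor L T R on ℬ carries a comonad structure with comultiplication (L T ν T R) ∘ (L δ^T R) : L T R → L T R L T R and counit ε ∘ (L ε^T R) : L T R → Id_ℬ, and β := (S ε) ∘ (λ R) : L T R → S is a morphism of comonads (the identity functor on ℬ together with β is a comonad morphism). -/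
open CategoryTheory

/-- Given an adjunction `L ⊣ R`, a comonad `T` on `𝒜` and a comonad morphism
`λ : L T ⟶ S L` to a comonad `S` on `ℬ`, the endofunctor `L T R` carries a comonad
structure with comultiplication `(L T ν T R) ∘ (L δ^T R)` and counit `ε ∘ (L ε^T R)`,
and `β := (S ε) ∘ (λ R) : L T R ⟶ S` is a morphism of comonads. -/
theorem stmt15 {A : Type*} [Category A] {B : Type*} [Category B]
    (L : A ⥤ B) (R : B ⥤ A) (adj : L ⊣ R)
    (T : Comonad A) (S : Comonad B)
    (l : T.toFunctor ⋙ L ⟶ L ⋙ S.toFunctor)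
    (hl1 : (Functor.whiskerRight T.δ L ≫ Functor.whiskerLeft T.toFunctor l ≫ Functor.whiskerRight l S.toFunctor :
        T.toFunctor ⋙ L ⟶ L ⋙ S.toFunctor ⋙ S.toFunctor) = l ≫ Functor.whiskerLeft L S.δ)
    (hl2 : (l ≫ Functor.whiskerLeft L S.ε : T.toFunctor ⋙ L ⟶ L) = Functor.whiskerRight T.ε L) :
    -- the comonad structure on `G := L T R` (precomposition order: `R ⋙ T ⋙ L`)
    (let G : B ⥤ B := R ⋙ T.toFunctor ⋙ L
     let δhat : G ⟶ G ⋙ G :=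
       Functor.whiskerLeft R (Functor.whiskerRight T.δ L) ≫
         Functor.whiskerLeft (R ⋙ T.toFunctor) (Functor.whiskerRight adj.unit (T.toFunctor ⋙ L))
     let εhat : G ⟶ 𝟭 B :=
       Functor.whiskerLeft R (Functor.whiskerRight T.ε L) ≫ adj.counit
     let β : G ⟶ S.toFunctor :=
       Functor.whiskerLeft R l ≫ Functor.whiskerRight adj.counit S.toFunctor
     -- comonad axioms for (G, δhat, εhat)
     ((δhat ≫ Functor.whiskerLeft G δhat : G ⟶ (G ⋙ G) ⋙ G) = δhat ≫ Functor.whiskerRight δhat G) ∧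
     (δhat ≫ Functor.whiskerLeft G εhat = 𝟙 G) ∧
     ((δhat ≫ Functor.whiskerRight εhat G : G ⟶ G) = 𝟙 G) ∧
     -- β is a comonad morphism
     (β ≫ S.δ = δhat ≫ Functor.whiskerLeft G β ≫ Functor.whiskerRight β S.toFunctor) ∧
     (β ≫ S.ε = εhat)) := by
  intro G δhat εhat β
  have hl1' : ∀ x : A, L.map (T.δ.app x) ≫ l.app (T.obj x) ≫ S.map (l.app x)
      = l.app x ≫ S.δ.app (L.obj x) := fun x => by
    simpa using NatTrans.congr_app hl1 x
  have hl2' : ∀ x : A, l.app x ≫ S.ε.app (L.obj x) = L.map (T.ε.app x) := fun x => by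
    simpa using NatTrans.congr_app hl2 x
  refine ⟨?_, ?_, ?_, ?_, ?_⟩
  · ext X
    simp only [G, δhat, εhat, β]
    simp only [NatTrans.comp_app, Functor.whiskerLeft_app, Functor.whiskerRight_app, Functor.comp_obj,
      Functor.comp_map, Functor.whiskerLeft_comp, Category.assoc]
    simp only [← Functor.map_comp, ← Functor.map_comp_assoc, Category.assoc]
    congr 1
    rw [NatTrans.naturality_assoc T.δ]
    simp only [Functor.comp_map, Functor.id_obj]
    rw [← Comonad.coassoc_assoc]
    have h1 := adj.unit.naturality (T.δ.app (R.obj X))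
    have h2 := adj.unit.naturality (T.map (adj.unit.app (T.obj (R.obj X))))
    simp only [Functor.comp_map, Functor.id_map, Functor.id_obj, Functor.comp_obj] at h1 h2
    rw [L.map_comp, R.map_comp, ← reassoc_of% h1, ← h2]
    simp [Functor.map_comp]
  · ext X
    simp only [G, δhat, εhat, β, NatTrans.comp_app, Functor.whiskerLeft_app, Functor.whiskerRight_app,
      Functor.comp_obj, Functor.comp_map, Functor.id_obj, NatTrans.id_app, Category.assoc]
    rw [← Functor.map_comp_assoc, ← Functor.map_comp_assoc, Category.assoc,
      T.ε.naturality, Functor.id_map, Comonad.left_counit_assoc]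
    exact adj.left_triangle_components _
  · ext X
    simp only [G, δhat, εhat, β, NatTrans.comp_app, Functor.whiskerLeft_app, Functor.whiskerRight_app,
      Functor.comp_obj, Functor.comp_map, Functor.id_obj, NatTrans.id_app, Category.assoc]
    simp only [← Functor.map_comp, ← Functor.map_comp_assoc, Category.assoc]
    rw [R.map_comp]
    erw [← adj.unit.naturality_assoc]
    simp
  · ext X
    simp only [G, δhat, εhat, β, NatTrans.comp_app, Functor.whiskerLeft_app, Functor.whiskerRight_app,
      Functor.comp_obj, Functor.comp_map, Functor.id_obj, Category.assoc]
    have h3 := S.δ.naturality (adj.counit.app X)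
    have h4 := l.naturality (adj.unit.app (T.obj (R.obj X)))
    simp only [Functor.comp_map, Functor.id_obj, Functor.comp_obj] at h3 h4
    rw [h3, reassoc_of% h4, ← Functor.map_comp_assoc, adj.left_triangle_components,
      CategoryTheory.Functor.map_id, Category.id_comp, CategoryTheory.Functor.map_comp, reassoc_of% (hl1' (R.obj X))]
  · ext X
    simp only [G, δhat, εhat, β, NatTrans.comp_app, Functor.whiskerLeft_app, Functor.whiskerRight_app,
      Functor.comp_obj, Functor.id_obj, Category.assoc]
    rw [NatTrans.naturality S.ε, Functor.id_map, reassoc_of% (hl2' (R.obj X))]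
end

section
/- Let X be a set and A a small category with object set X, considered as a monoid in (span(X), ∘, I) where M ∘ N = {(m,n) | s(m) = t(n)}. Suppose there exist x ≠ y in X with A(x,y) = ∅ but A(y,x) ≠ ∅, and A(x,x) ≠ ∅. Then there is a right A-module Q (a span over X with associative unital A-action) for which the map β_Q : {(q,a) | s(q) = t(q) = t(a)} → {(q,a) | s(q) = s(a), t(q) = t(a)}, (q,a) ↦ (q.a, a), is not injective. -/
/-- If `A(x,y) = ∅` but `A(y,x) ≠ ∅` (and `A(x,x) ≠ ∅`) for some `x ≠ y`, then there
is a right `A`-module `Q` for which `β_Q : (q,a) ↦ (q.a, a)` is not injective. -/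
theorem stmt17 {X : Type} (C : SpanCat X) (x y : X) (hxy : x ≠ y)
    (hno : ∀ a : C.A, ¬(C.s a = x ∧ C.t a = y))
    (hyx : ∃ b : C.A, C.s b = y ∧ C.t b = x)
    (hxx : ∃ c : C.A, C.s c = x ∧ C.t c = x) :
    ∃ M : SpanMod X C, ¬ Function.Injective (betaMap C M) := by
  classical
  set Reach : X → Prop := fun u => ∃ a : C.A, C.s a = x ∧ C.t a = u with hReach
  have hReachx : Reach x := hxx
  have hnoty : ¬ Reach y := by
    rintro ⟨a, ha1, ha2⟩; exact hno a ⟨ha1, ha2⟩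
  refine ⟨{
    Q := {p : X × Bool // p.2 = true → Reach p.1}
    s := fun q => q.1.1
    t := fun _ => x
    act := fun q a _ => ⟨(C.s a, if Reach (C.s a) then q.1.2 else false), by
      intro hb
      by_cases hR : Reach (C.s a)
      · exact hR
      · simp [hR] at hb⟩
    s_act := fun _ _ _ => rfl
    t_act := fun _ _ _ => rfl
    act_assoc := ?_
    act_one := ?_ }, ?_⟩
  · intro q a b h1 h2
    apply Subtype.ext
    apply Prod.ext
    · exact (C.s_comp a b h2).symm
    · simp only
      rw [C.s_comp a b h2]
      by_cases hRb : Reach (C.s b)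
      · have hRa : Reach (C.s a) := by
          obtain ⟨g, hg1, hg2⟩ := hRb
          exact ⟨C.comp b g hg2.symm, by rw [C.s_comp]; exact hg1,
            by rw [C.t_comp]; exact h2.symm⟩
        simp [hRb, hRa]
      · simp [hRb]
  · intro q
    apply Subtype.ext
    apply Prod.ext
    · exact C.s_one _
    · simp only
      rw [C.s_one]
      rcases hb : q.1.2 with _ | _
      · simp
      · simp [q.2 hb]
  · obtain ⟨b, hb1, hb2⟩ := hyx
    intro hinj
    have h1 : (⟨((⟨(x, true), fun _ => hReachx⟩ : {p : X × Bool // p.2 = true → Reach p.1}), b), rfl, hb2.symm⟩ :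
        {p : {p : X × Bool // p.2 = true → Reach p.1} × C.A // p.1.1.1 = x ∧ x = C.t p.2}) =
        ⟨(⟨(x, false), fun h => by simp at h⟩, b), rfl, hb2.symm⟩ := by
      apply hinj
      apply Subtype.ext
      simp only [betaMap]
      apply Prod.ext
      · apply Subtype.ext
        apply Prod.ext
        · rfl
        · simp only
          rw [hb1]
          simp [hnoty]
      · rfl
    have := congrArg (fun p => p.1.1.1.2) h1
    simp at this
end
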